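/- arXiv:1411.1788 — 3 statements merged into one kernel-verified Lean document; each statement's English description precedes it below -/
import Mathlib

section
/- Let a, b be integers with a ≡ b (mod 2) and let D be the unbalanced 2-cycle with its two vertices as terminals. If D admits an (a,b)-pseudoflow, then a ≠ b and a ≠ −b. Conversely, if a ≠ b, a ≠ −b and a, b ∈ I5 = {−5,…,5}, then D admits an (a,b)-pseudoflow. -/
/-!
Signed multigraphs (parallel edges allowed), two-terminal graphs,
series/parallel connections and flows, following the terminology of
Kaiser–Rollová, "Nowhere-zero flows in signed series-parallel graphs".

Vertices and edges are labelled by natural numbers.  An edge `e` has the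
two endvertices `fst e` and `snd e` (its two half-edges are the ends at
`fst e` and at `snd e`), and `sign e = true` means that `e` is positive.
-/

/-- The value `+1` (pointing towards its endvertex) or `-1` (pointing away)
of a Boolean direction of a half-edge. -/
def dirVal (b : Bool) : ℤ := if b then 1 else -1

/-- A signed multigraph. -/
structure SignedGraph where
  verts : Finset ℕ
  edges : Finset ℕ
  fst : ℕ → ℕ
  snd : ℕ → ℕ
  sign : ℕ → Bool
  fst_mem : ∀ e ∈ edges, fst e ∈ verts
  snd_mem : ∀ e ∈ edges, snd e ∈ verts

namespace SignedGraph

/-- Edge `e` joins the vertices `u` and `v`. -/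
def Joins (G : SignedGraph) (e u v : ℕ) : Prop :=
  (G.fst e = u ∧ G.snd e = v) ∨ (G.fst e = v ∧ G.snd e = u)

/-- `u` and `v` are adjacent (joined by some edge). -/
def Adj (G : SignedGraph) (u v : ℕ) : Prop := ∃ e ∈ G.edges, G.Joins e u v

/-- The degree of a vertex (each incidence of an edge counts once,
so loops count twice). -/
def degree (G : SignedGraph) (v : ℕ) : ℕ :=
  ∑ e ∈ G.edges, ((if G.fst e = v then 1 else 0) + (if G.snd e = v then 1 else 0))

/-- `e` and `f` are parallel edges: distinct edges joining the same
pair of vertices. -/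
def Parallel (G : SignedGraph) (e f : ℕ) : Prop :=
  e ≠ f ∧ ((G.fst e = G.fst f ∧ G.snd e = G.snd f) ∨
           (G.fst e = G.snd f ∧ G.snd e = G.fst f))

/-- `v` is contained in a 2-cycle (a cycle formed by two parallel edges). -/
def In2Cycle (G : SignedGraph) (v : ℕ) : Prop :=
  ∃ e ∈ G.edges, ∃ f ∈ G.edges, G.Parallel e f ∧ G.fst e ≠ G.snd e ∧
    (G.fst e = v ∨ G.snd e = v)

/-- `beta G` is the number of distinct 2-cycles of `G`. -/
def beta (G : SignedGraph) : ℕ :=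
  ((G.edges ×ˢ G.edges).filter fun p => p.1 < p.2 ∧ G.fst p.1 ≠ G.snd p.1 ∧
     ((G.fst p.1 = G.fst p.2 ∧ G.snd p.1 = G.snd p.2) ∨
      (G.fst p.1 = G.snd p.2 ∧ G.snd p.1 = G.fst p.2))).card

/-- An orientation of a signed graph: `o₁ e` (resp. `o₂ e`) tells whether the
half-edge of `e` at `fst e` (resp. at `snd e`) points towards its endvertex.
Of the two half-edges of a positive edge exactly one points towards its
endvertex, while for a negative edge none or both do. -/
def IsOrientation (G : SignedGraph) (o₁ o₂ : ℕ → Bool) : Prop :=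
  ∀ e ∈ G.edges, (G.sign e = true → o₁ e ≠ o₂ e) ∧ (G.sign e = false → o₁ e = o₂ e)

/-- The excess (inflow minus outflow) at a vertex `v`. -/
def excess (G : SignedGraph) (o₁ o₂ : ℕ → Bool) (φ : ℕ → ℤ) (v : ℕ) : ℤ :=
  ∑ e ∈ G.edges, ((if G.fst e = v then dirVal (o₁ e) * φ e else 0) +
                  (if G.snd e = v then dirVal (o₂ e) * φ e else 0))

/-- `(o₁, o₂, φ)` is a nowhere-zero `k`-flow on `G`: an orientation together
with a valuation of the edges by nonzero integers of absolute value less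
than `k` such that at every vertex the inflow equals the outflow. -/
structure IsNZFlow (G : SignedGraph) (k : ℕ) (o₁ o₂ : ℕ → Bool) (φ : ℕ → ℤ) : Prop where
  orient : G.IsOrientation o₁ o₂
  nonzero : ∀ e ∈ G.edges, φ e ≠ 0
  bounded : ∀ e ∈ G.edges, |φ e| < (k : ℤ)
  conserve : ∀ v ∈ G.verts, G.excess o₁ o₂ φ v = 0

/-- `G` admits a nowhere-zero `k`-flow. -/
def HasNZFlow (G : SignedGraph) (k : ℕ) : Prop := ∃ o₁ o₂ φ, G.IsNZFlow k o₁ o₂ φ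

/-- `G` is flow-admissible: it admits a nowhere-zero `k`-flow for some `k`. -/
def FlowAdmissible (G : SignedGraph) : Prop := ∃ k, G.HasNZFlow k

/-- `(vs, es)` is a cycle of `G`: distinct vertices `vs = [v₀, …, v_{m-1}]`,
distinct edges `es = [e₀, …, e_{m-1}]`, where `eᵢ` joins `vᵢ` and
`v_{i+1 (mod m)}`. -/
structure IsCycle (G : SignedGraph) (vs es : List ℕ) : Prop where
  nonempty : es ≠ []
  len : vs.length = es.length
  vnodup : vs.Nodup
  enodup : es.Nodup
  vmem : ∀ v ∈ vs, v ∈ G.verts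
  emem : ∀ e ∈ es, e ∈ G.edges
  link : ∀ i < es.length,
    G.Joins (es.getD i 0) (vs.getD i 0) (vs.getD ((i + 1) % vs.length) 0)

/-- The number of negative edges in a list of edges. -/
def negCount (G : SignedGraph) (es : List ℕ) : ℕ :=
  (es.filter fun e => G.sign e = false).length

/-- A balanced cycle: a cycle with an even number of negative edges. -/
def IsBalancedCycle (G : SignedGraph) (vs es : List ℕ) : Prop :=
  G.IsCycle vs es ∧ Even (G.negCount es)

/-- An unbalanced cycle: a cycle with an odd number of negative edges. -/
def IsUnbalancedCycle (G : SignedGraph) (vs es : List ℕ) : Prop :=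
  G.IsCycle vs es ∧ Odd (G.negCount es)

/-- A signed graph is unbalanced if it contains an unbalanced cycle. -/
def IsUnbalanced (G : SignedGraph) : Prop := ∃ vs es, G.IsUnbalancedCycle vs es

/-- `(vs, es)` is a path of `G` (possibly trivial, i.e. a single vertex). -/
structure IsPath (G : SignedGraph) (vs es : List ℕ) : Prop where
  nonempty : vs ≠ []
  len : vs.length = es.length + 1
  vnodup : vs.Nodup
  enodup : es.Nodup
  vmem : ∀ v ∈ vs, v ∈ G.verts
  emem : ∀ e ∈ es, e ∈ G.edges
  link : ∀ i < es.length, G.Joins (es.getD i 0) (vs.getD i 0) (vs.getD (i + 1) 0)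

/-- A barbell: two edge-disjoint unbalanced cycles together with a path,
which either joins two vertex-disjoint cycles and is internally
vertex-disjoint from them, or is the trivial path at the single
common vertex of the two cycles. -/
structure IsBarbell (G : SignedGraph) (vs₁ es₁ vs₂ es₂ pvs pes : List ℕ) : Prop where
  cyc1 : G.IsUnbalancedCycle vs₁ es₁
  cyc2 : G.IsUnbalancedCycle vs₂ es₂
  edge_disj : ∀ e ∈ es₁, e ∉ es₂
  path : G.IsPath pvs pes
  shape :
    ((∀ v ∈ vs₁, v ∉ vs₂) ∧
      pvs.getD 0 0 ∈ vs₁ ∧ pvs.getD (pvs.length - 1) 0 ∈ vs₂ ∧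
      (∀ i, 0 < i → i < pvs.length - 1 → pvs.getD i 0 ∉ vs₁ ∧ pvs.getD i 0 ∉ vs₂)) ∨
    (∃ w, w ∈ vs₁ ∧ w ∈ vs₂ ∧ (∀ v ∈ vs₁, v ∈ vs₂ → v = w) ∧ pvs = [w] ∧ pes = [])

/-- The edge `e` is contained in a signed circuit (a balanced cycle
or a barbell). -/
def InSignedCircuit (G : SignedGraph) (e : ℕ) : Prop :=
  (∃ vs es, G.IsBalancedCycle vs es ∧ e ∈ es) ∨
  (∃ vs₁ es₁ vs₂ es₂ pvs pes, G.IsBarbell vs₁ es₁ vs₂ es₂ pvs pes ∧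
    (e ∈ es₁ ∨ e ∈ es₂ ∨ e ∈ pes))

/-- `H` is a subgraph of `G` (with the same labels, endvertices and signs). -/
def IsSubgraph (H G : SignedGraph) : Prop :=
  H.verts ⊆ G.verts ∧ H.edges ⊆ G.edges ∧
  ∀ e ∈ H.edges, H.fst e = G.fst e ∧ H.snd e = G.snd e ∧ H.sign e = G.sign e

/-- Switching at a vertex `v`: the signs of all edges incident with `v`
(i.e. with exactly one end at `v`) are inverted. -/
def switchAt (G : SignedGraph) (v : ℕ) : SignedGraph where
  verts := G.verts
  edges := G.edges
  fst := G.fst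
  snd := G.snd
  sign := fun e => if xor (G.fst e == v) (G.snd e == v) then !(G.sign e) else G.sign e
  fst_mem := G.fst_mem
  snd_mem := G.snd_mem

/-- Connectedness of a (nonempty) signed graph. -/
def Connected (G : SignedGraph) : Prop :=
  G.verts.Nonempty ∧ ∀ u ∈ G.verts, ∀ v ∈ G.verts, Relation.ReflTransGen G.Adj u v

/-- Deletion of a vertex together with all incident edges. -/
def deleteVert (G : SignedGraph) (v : ℕ) : SignedGraph where
  verts := G.verts.erase v
  edges := G.edges.filter fun e => G.fst e ≠ v ∧ G.snd e ≠ v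
  fst := G.fst
  snd := G.snd
  sign := G.sign
  fst_mem := by
    intro e he
    simp only [Finset.mem_filter] at he
    exact Finset.mem_erase.mpr ⟨he.2.1, G.fst_mem e he.1⟩
  snd_mem := by
    intro e he
    simp only [Finset.mem_filter] at he
    exact Finset.mem_erase.mpr ⟨he.2.2, G.snd_mem e he.1⟩

/-- `G` is 2-connected: it is connected and remains connected after the
deletion of any single vertex. -/
def TwoConnected (G : SignedGraph) : Prop :=
  G.Connected ∧ ∀ v ∈ G.verts, (G.deleteVert v).Connected

end SignedGraph

/-- A two-terminal signed graph: a signed graph with two distinguished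
distinct vertices, the source terminal `s` and the target terminal `t`. -/
structure TTGraph extends SignedGraph where
  s : ℕ
  t : ℕ
  s_mem : s ∈ verts
  t_mem : t ∈ verts
  s_ne_t : s ≠ t

namespace TTGraph

/-- Switching at a vertex of a two-terminal signed graph. -/
def switchAt (G : TTGraph) (v : ℕ) : TTGraph where
  toSignedGraph := G.toSignedGraph.switchAt v
  s := G.s
  t := G.t
  s_mem := G.s_mem
  t_mem := G.t_mem
  s_ne_t := G.s_ne_t

end TTGraph

/-- Two two-terminal signed graphs are switching equivalent if one is
obtained from the other by a finite sequence of switchings. -/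
def SwitchEquiv (G G' : TTGraph) : Prop :=
  Relation.ReflTransGen (fun A B => ∃ v ∈ A.verts, B = A.switchAt v) G G'

/-- `G` is the series connection `S(H₁, H₂)`: `H₁` and `H₂` are subgraphs
of `G` sharing exactly the vertex `H₁.t = H₂.s`, partitioning the edges,
with `G.s = H₁.s` and `G.t = H₂.t`. -/
structure IsSeriesConn2 (G H₁ H₂ : TTGraph) : Prop where
  sub1 : SignedGraph.IsSubgraph H₁.toSignedGraph G.toSignedGraph
  sub2 : SignedGraph.IsSubgraph H₂.toSignedGraph G.toSignedGraph
  vert_union : H₁.verts ∪ H₂.verts = G.verts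
  vert_inter : H₁.verts ∩ H₂.verts = {H₁.t}
  mid : H₁.t = H₂.s
  edge_union : H₁.edges ∪ H₂.edges = G.edges
  edge_disj : Disjoint H₁.edges H₂.edges
  src : G.s = H₁.s
  tgt : G.t = H₂.t

/-- `G` is the parallel connection `P(H₁, H₂)`: `H₁` and `H₂` are subgraphs
of `G` sharing exactly the two terminals, partitioning the edges, with the
terminals of `G`, `H₁` and `H₂` identified. -/
structure IsParallelConn2 (G H₁ H₂ : TTGraph) : Prop where
  sub1 : SignedGraph.IsSubgraph H₁.toSignedGraph G.toSignedGraph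
  sub2 : SignedGraph.IsSubgraph H₂.toSignedGraph G.toSignedGraph
  vert_union : H₁.verts ∪ H₂.verts = G.verts
  vert_inter : H₁.verts ∩ H₂.verts = {H₁.s, H₁.t}
  src_eq : H₁.s = H₂.s
  tgt_eq : H₁.t = H₂.t
  edge_union : H₁.edges ∪ H₂.edges = G.edges
  edge_disj : Disjoint H₁.edges H₂.edges
  src : G.s = H₁.s
  tgt : G.t = H₁.t

/-- `G` is a (signed) copy of `K₂`: a single edge joining the two terminals. -/
def IsSignedK2 (G : TTGraph) : Prop :=
  G.verts = {G.s, G.t} ∧ ∃ e, G.edges = {e} ∧ G.toSignedGraph.Joins e G.s G.t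

/-- Series-parallel two-terminal graphs: obtained from copies of `K₂` by
iterated series and parallel connections. -/
inductive IsSP : TTGraph → Prop
  | k2 {G} : IsSignedK2 G → IsSP G
  | series {G H₁ H₂} : IsSeriesConn2 G H₁ H₂ → IsSP H₁ → IsSP H₂ → IsSP G
  | parallel {G H₁ H₂} : IsParallelConn2 G H₁ H₂ → IsSP H₁ → IsSP H₂ → IsSP G

/-- `G` is the series connection `S(H₁, …, Hₙ)` of the graphs in the list
(of length at least two). -/
inductive IsSeriesConnList : TTGraph → List TTGraph → Prop
  | two {G H₁ H₂} : IsSeriesConn2 G H₁ H₂ → IsSeriesConnList G [H₁, H₂]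
  | cons {G G' H l} : IsSeriesConn2 G H G' → IsSeriesConnList G' l →
      IsSeriesConnList G (H :: l)

/-- `G` is the parallel connection `P(H₁, …, Hₙ)` of the graphs in the list
(of length at least two). -/
inductive IsParallelConnList : TTGraph → List TTGraph → Prop
  | two {G H₁ H₂} : IsParallelConn2 G H₁ H₂ → IsParallelConnList G [H₁, H₂]
  | cons {G G' H l} : IsParallelConn2 G H G' → IsParallelConnList G' l →
      IsParallelConnList G (H :: l)

/-- `l` is the list of parts of `G` for a series connection: `G` is a series
connection of the series-parallel graphs in `l`, with `l` of maximum length. -/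
def IsSeriesPartsOf (G : TTGraph) (l : List TTGraph) : Prop :=
  IsSeriesConnList G l ∧ (∀ H ∈ l, IsSP H) ∧
  ∀ l', IsSeriesConnList G l' → (∀ H ∈ l', IsSP H) → l'.length ≤ l.length

/-- `l` is the list of parts of `G` for a parallel connection. -/
def IsParallelPartsOf (G : TTGraph) (l : List TTGraph) : Prop :=
  IsParallelConnList G l ∧ (∀ H ∈ l, IsSP H) ∧
  ∀ l', IsParallelConnList G l' → (∀ H ∈ l', IsSP H) → l'.length ≤ l.length

/-- `l` is the list of parts of `G`. -/
def IsPartsOf (G : TTGraph) (l : List TTGraph) : Prop :=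
  IsSeriesPartsOf G l ∨ IsParallelPartsOf G l

/-- `H` is a part of `G`. -/
def IsPart (H G : TTGraph) : Prop := ∃ l, IsPartsOf G l ∧ H ∈ l

/-- `H` is a piece of `G`: there is a sequence `H = H₀, H₁, …, Hₘ = G`
where each `Hⱼ` is a part of `H_{j+1}`; in particular `G` is a piece of
itself. -/
def IsPiece (H G : TTGraph) : Prop := Relation.ReflTransGen IsPart H G

/-- `G` is of series type: it is a series connection of its parts. -/
def IsSeriesType (G : TTGraph) : Prop := ∃ l, IsSeriesPartsOf G l

/-- `G` is of parallel type: it is a parallel connection of its parts. -/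
def IsParallelType (G : TTGraph) : Prop := ∃ l, IsParallelPartsOf G l

/-- `H` is an endpart of `G`: the first or last part of a series
decomposition of `G` into its parts. -/
def IsEndpartOf (H G : TTGraph) : Prop :=
  ∃ l, IsSeriesPartsOf G l ∧ (l.head? = some H ∨ l.getLast? = some H)

/-- `DepthLe G d`: the depth of `G` is at most `d`.  The depth of a signed
`K₂` is `0`; otherwise it is `1` plus the maximum depth of a part. -/
inductive DepthLe : TTGraph → ℕ → Prop
  | k2 {G d} : IsSignedK2 G → DepthLe G d
  | step {G l d} : IsPartsOf G l → (∀ H ∈ l, DepthLe H d) → DepthLe G (d + 1)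

/-- `HasDepth G d`: the depth of `G` is exactly `d`, i.e. `d` is the least
upper bound in the recursive definition of depth. -/
def HasDepth (G : TTGraph) (d : ℕ) : Prop :=
  DepthLe G d ∧ ∀ d' < d, ¬ DepthLe G d'

/-- `G` is reduced: each non-terminal vertex has degree at least `3`, and
no two parallel edges have the same sign. -/
def IsReducedGraph (G : TTGraph) : Prop :=
  (∀ v ∈ G.verts, v ≠ G.s → v ≠ G.t → 3 ≤ G.toSignedGraph.degree v) ∧
  (∀ e ∈ G.edges, ∀ f ∈ G.edges, G.toSignedGraph.Parallel e f → G.sign e ≠ G.sign f)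

/-- `G` is a positive `K₂` (denoted `K₂⁺`). -/
def IsPositiveK2 (G : TTGraph) : Prop :=
  IsSignedK2 G ∧ ∀ e ∈ G.edges, G.sign e = true

/-- `G` is the unbalanced 2-cycle `D`: two parallel edges of opposite signs
joining the two terminals. -/
def IsUnbalanced2Cycle (G : TTGraph) : Prop :=
  G.verts = {G.s, G.t} ∧ ∃ e f, e ≠ f ∧ G.edges = {e, f} ∧
    G.toSignedGraph.Joins e G.s G.t ∧ G.toSignedGraph.Joins f G.s G.t ∧
    G.sign e ≠ G.sign f

/-- `G` is a string: a copy of `K₂⁺` or `D`, or a series connection of copies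
of `K₂⁺` and `D`, in which every non-terminal vertex lies in a 2-cycle. -/
def IsString (G : TTGraph) : Prop :=
  (IsPositiveK2 G ∨ IsUnbalanced2Cycle G ∨
    ∃ l, IsSeriesConnList G l ∧ ∀ H ∈ l, IsPositiveK2 H ∨ IsUnbalanced2Cycle H) ∧
  ∀ v ∈ G.verts, v ≠ G.s → v ≠ G.t → G.toSignedGraph.In2Cycle v

/-- `G` is a necklace: a parallel connection of two strings, at least one of
which is nontrivial (has more than two vertices). -/
def IsNecklace (G : TTGraph) : Prop :=
  ∃ H₁ H₂, IsParallelConn2 G H₁ H₂ ∧ IsString H₁ ∧ IsString H₂ ∧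
    (2 < H₁.verts.card ∨ 2 < H₂.verts.card)

/-- `(o₁, o₂, φ)` is an `(a,b)`-pseudoflow on the two-terminal signed graph
`G`: like a nowhere-zero 6-flow, except that at the source terminal the
outflow exceeds the inflow by `a`, and at the target terminal the inflow
exceeds the outflow by `b`. -/
structure IsPseudoflow (G : TTGraph) (a b : ℤ) (o₁ o₂ : ℕ → Bool) (φ : ℕ → ℤ) :
    Prop where
  orient : G.toSignedGraph.IsOrientation o₁ o₂
  nonzero : ∀ e ∈ G.edges, φ e ≠ 0
  bounded : ∀ e ∈ G.edges, |φ e| < 6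
  conserve : ∀ v ∈ G.verts, v ≠ G.s → v ≠ G.t →
    G.toSignedGraph.excess o₁ o₂ φ v = 0
  out_s : G.toSignedGraph.excess o₁ o₂ φ G.s = -a
  in_t : G.toSignedGraph.excess o₁ o₂ φ G.t = b

/-- `G` admits an `(a,b)`-pseudoflow. -/
def HasPseudoflow (G : TTGraph) (a b : ℤ) : Prop :=
  ∃ o₁ o₂ φ, IsPseudoflow G a b o₁ o₂ φ

/-- `I₅ = {-5, …, 5}`. -/
noncomputable def I5 : Finset ℤ := Finset.Icc (-5) 5

/-- The pair `(a,b)` is valid for `G`: `a ≠ 0` or `deg(s) ≥ 2`, and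
`b ≠ 0` or `deg(t) ≥ 2`. -/
def ValidPair (G : TTGraph) (a b : ℤ) : Prop :=
  (a ≠ 0 ∨ 2 ≤ G.toSignedGraph.degree G.s) ∧
  (b ≠ 0 ∨ 2 ≤ G.toSignedGraph.degree G.t)

/-- `G` is a flow-admissible signed series-parallel graph with no
nowhere-zero 6-flow, with the minimum number of edges among all such
graphs. -/
def MinCounterexample (G : TTGraph) : Prop :=
  IsSP G ∧ G.toSignedGraph.FlowAdmissible ∧ ¬ G.toSignedGraph.HasNZFlow 6 ∧
  ∀ G' : TTGraph, IsSP G' → G'.toSignedGraph.FlowAdmissible →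
    ¬ G'.toSignedGraph.HasNZFlow 6 → G.edges.card ≤ G'.edges.card

/-- `W` is a copy of `S(K₂⁺, D, K₂⁺)`. -/
def IsSK2DK2 (W : TTGraph) : Prop :=
  ∃ A B C, IsSeriesConnList W [A, B, C] ∧ IsPositiveK2 A ∧
    IsUnbalanced2Cycle B ∧ IsPositiveK2 C

/-- `G'` is obtained from `G` by replacing the piece `H` (with terminals
`H.s`, `H.t`) by the two-terminal graph `W`: the edges and non-terminal
vertices of `H` are removed, `W` (whose new vertices are fresh) is added,
and its terminals are identified with the terminals of `H`. -/
def IsReplacement (G H G' W : TTGraph) : Prop :=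
  W.s = H.s ∧ W.t = H.t ∧ G'.s = G.s ∧ G'.t = G.t ∧
  W.verts ∩ G.verts ⊆ {H.s, H.t} ∧
  G'.verts = (G.verts \ (H.verts \ {H.s, H.t})) ∪ W.verts ∧
  G'.edges = (G.edges \ H.edges) ∪ W.edges ∧
  Disjoint (G.edges \ H.edges) W.edges ∧
  (∀ e ∈ G.edges \ H.edges,
    G'.fst e = G.fst e ∧ G'.snd e = G.snd e ∧ G'.sign e = G.sign e) ∧
  SignedGraph.IsSubgraph W.toSignedGraph G'.toSignedGraph

lemma dirVal_cases (x : Bool) : dirVal x = 1 ∨ dirVal x = -1 := by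
  cases x <;> simp [dirVal]

lemma dirVal_snd {s x y : Bool} (h1 : s = true → x ≠ y) (h2 : s = false → x = y) :
    dirVal y = -(dirVal s * dirVal x) := by
  cases s <;> cases x <;> cases y <;> simp_all [dirVal]

/-- Let `a ≡ b (mod 2)`.  If the unbalanced 2-cycle `D`
admits an `(a,b)`-pseudoflow then `a ≠ ±b`; conversely, if `a ≠ ±b` and
`a, b ∈ I₅`, then `D` admits an `(a,b)`-pseudoflow. -/
theorem digon_pseudoflow_iff (G : TTGraph) (hD : IsUnbalanced2Cycle G)
    (a b : ℤ) (hpar : a % 2 = b % 2) :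
    (HasPseudoflow G a b → a ≠ b ∧ a ≠ -b) ∧
    (a ≠ b → a ≠ -b → a ∈ I5 → b ∈ I5 → HasPseudoflow G a b) := by
  obtain ⟨hverts, e, f, hef, hedges, hje, hjf, hsgn⟩ := hD
  have hst := G.s_ne_t
  have hts := hst.symm
  have hes : e ∈ G.edges := by rw [hedges]; simp
  have hfs : f ∈ G.edges := by rw [hedges]; simp
  constructor
  · rintro ⟨o₁, o₂, φ, hpf⟩
    have hne : φ e ≠ 0 := hpf.nonzero e hes
    have hnf : φ f ≠ 0 := hpf.nonzero f hfs
    have oe := hpf.orient e hes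
    have og := hpf.orient f hfs
    have Es := hpf.out_s
    have Et := hpf.in_t
    unfold SignedGraph.excess at Es Et
    rw [hedges, Finset.sum_pair hef] at Es Et
    simp only [dirVal_snd oe.1 oe.2, dirVal_snd og.1 og.2] at Es Et
    cases s1 : G.toSignedGraph.sign e <;> cases s2 : G.toSignedGraph.sign f <;>
      first
      | exact absurd (s1.trans s2.symm) hsgn
      | (rw [s1, s2] at Es Et
         rcases dirVal_cases (o₁ e) with hd1|hd1 <;> rcases dirVal_cases (o₁ f) with hd2|hd2 <;>
           rw [hd1, hd2] at Es Et <;>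
           rcases hje with ⟨h1,h2⟩|⟨h1,h2⟩ <;> rcases hjf with ⟨h3,h4⟩|⟨h3,h4⟩ <;>
           rw [h1, h2, h3, h4] at Es Et <;>
           simp [hst, hts, dirVal] at Es Et <;>
           exact ⟨by omega, by omega⟩)
  · intro hab hab' ha hb
    simp only [I5, Finset.mem_Icc] at ha hb
    obtain ⟨u, hu⟩ : (2:ℤ) ∣ (a + b) := by omega
    obtain ⟨v, hv⟩ : (2:ℤ) ∣ (b - a) := by omega
    refine ⟨fun g => if G.toSignedGraph.fst g = G.s then true else !(G.toSignedGraph.sign g),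
           fun g => if G.toSignedGraph.fst g = G.s then !(G.toSignedGraph.sign g) else true,
           fun g => if G.toSignedGraph.sign g then -u else v, ?_, ?_, ?_, ?_, ?_, ?_⟩
    · intro g hg
      constructor <;> intro h <;> by_cases hc : G.toSignedGraph.fst g = G.s <;> simp [hc, h]
    · intro g hg
      by_cases hs : G.toSignedGraph.sign g = true <;> simp [hs] <;> omega
    · intro g hg
      by_cases hs : G.toSignedGraph.sign g = true <;> simp [hs, abs_lt] <;> omega
    · intro w hw hws hwt
      rw [hverts] at hw
      simp only [Finset.mem_insert, Finset.mem_singleton] at hw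
      rcases hw with h | h <;> [exact absurd h hws; exact absurd h hwt]
    · unfold SignedGraph.excess
      rw [hedges, Finset.sum_pair hef]
      rcases hje with ⟨h1,h2⟩|⟨h1,h2⟩ <;> rcases hjf with ⟨h3,h4⟩|⟨h3,h4⟩ <;>
        cases s1 : G.toSignedGraph.sign e <;> cases s2 : G.toSignedGraph.sign f <;>
        first
        | exact absurd (s1.trans s2.symm) hsgn
        | (simp [dirVal, h1, h2, h3, h4, s1, s2, hst, hts]; omega)
    · unfold SignedGraph.excess
      rw [hedges, Finset.sum_pair hef]
      rcases hje with ⟨h1,h2⟩|⟨h1,h2⟩ <;> rcases hjf with ⟨h3,h4⟩|⟨h3,h4⟩ <;>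
        cases s1 : G.toSignedGraph.sign e <;> cases s2 : G.toSignedGraph.sign f <;>
        first
        | exact absurd (s1.trans s2.symm) hsgn
        | (simp [dirVal, h1, h2, h3, h4, s1, s2, hst, hts]; omega)
end

section
/- Let G be a nontrivial string and let a, b ∈ I5 = {−5,…,5} be integers with a ≡ b (mod 2) such that the pair (a,b) is valid for G. Then G admits an (a,b)-pseudoflow if one of the following holds: (a) β(G) is odd and a ≠ ±b; (b) β(G) is even and a = ±b; (c) β(G) ≥ 2 and either a is odd or a = 0 or b = 0. -/
namespace StringPf

open Finset

/-- A value of the same parity as `c`, nonzero, bounded by 5, different from `±c`. -/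
def other (c : ℤ) : ℤ :=
  if c % 2 = 0 then (if c = 2 ∨ c = -2 then 4 else 2)
  else (if c = 1 ∨ c = -1 then 3 else 1)

lemma other_props (c : ℤ) : other c % 2 = c % 2 ∧ -5 ≤ other c ∧ other c ≤ 5 ∧
    other c ≠ 0 ∧ other c ≠ c ∧ other c ≠ -c := by
  unfold other; split_ifs <;> omega

/-- An odd value avoiding `±c`, `±b`, nonzero. -/
def third (c b : ℤ) : ℤ :=
  if c ≠ 1 ∧ c ≠ -1 ∧ b ≠ 1 ∧ b ≠ -1 then 1
  else if c ≠ 3 ∧ c ≠ -3 ∧ b ≠ 3 ∧ b ≠ -3 then 3 else 5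

lemma third_props {c b : ℤ} (hc : c % 2 = 1) (hb : b % 2 = 1)
    (hc5 : -5 ≤ c ∧ c ≤ 5) (hb5 : -5 ≤ b ∧ b ≤ 5) :
    third c b % 2 = 1 ∧ -5 ≤ third c b ∧ third c b ≤ 5 ∧ third c b ≠ 0 ∧
    third c b ≠ c ∧ third c b ≠ -c ∧ third c b ≠ b ∧ third c b ≠ -b := by
  unfold third; split_ifs <;> omega

/-- Evaluation of the contribution of a single edge joining `s` and `t`
under the standard orientation/valuation. -/
lemma edge_term (H : TTGraph) (g v : ℕ) (p q : ℤ)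
    (hj : H.toSignedGraph.Joins g H.s H.t) :
    ((if H.fst g = v then
        dirVal (if H.sign g then (H.fst g != H.s) else true) *
          (if H.sign g then p else q) else 0) +
     (if H.snd g = v then
        dirVal (if H.sign g then (H.snd g != H.s) else true) *
          (if H.sign g then p else q) else 0))
    = (if H.sign g then (if v = H.s then -p else if v = H.t then p else 0)
       else (if v = H.s then q else if v = H.t then q else 0)) := by
  have hst := H.s_ne_t
  have hbt : (H.t != H.s) = true := bne_iff_ne.mpr (Ne.symm hst)
  have hbs : (H.s != H.s) = false := bne_self_eq_false _
  rcases hj with ⟨h1, h2⟩ | ⟨h1, h2⟩ <;> cases hsg : H.sign g <;>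
    simp only [h1, h2, hsg, hbt, hbs, dirVal, Bool.false_eq_true, if_true, if_false,
      Bool.true_eq_false, ite_true, ite_false] <;>
    split_ifs <;> omega

/-- The standard orientation is an orientation when every edge joins `s` and `t`. -/
lemma std_orient (H : TTGraph) (hall : ∀ g ∈ H.edges, H.toSignedGraph.Joins g H.s H.t) :
    H.toSignedGraph.IsOrientation (fun g => if H.sign g then (H.fst g != H.s) else true)
      (fun g => if H.sign g then (H.snd g != H.s) else true) := by
  intro g hg
  have hj := hall g hg
  constructor
  · intro hs
    simp only [hs, if_true]
    rcases hj with ⟨h1, h2⟩ | ⟨h1, h2⟩ <;>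
      simp [h1, h2, bne_iff_ne, H.s_ne_t, Ne.symm H.s_ne_t]
  · intro hs; simp [hs]

lemma k2_pseudoflow (H : TTGraph) (h : IsPositiveK2 H) {a : ℤ}
    (ha : a ≠ 0) (ha5 : -5 ≤ a ∧ a ≤ 5) : HasPseudoflow H a a := by
  obtain ⟨⟨hv, e, he, hj⟩, hsign⟩ := h
  have hee : e ∈ H.edges := by rw [he]; exact Finset.mem_singleton_self e
  have hsg : H.sign e = true := hsign e hee
  have hall : ∀ g ∈ H.edges, H.toSignedGraph.Joins g H.s H.t := by
    intro g hg; rw [he, Finset.mem_singleton] at hg; subst hg; exact hj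
  refine ⟨fun g => if H.sign g then (H.fst g != H.s) else true,
          fun g => if H.sign g then (H.snd g != H.s) else true,
          fun g => if H.sign g then a else a, std_orient H hall, ?_, ?_, ?_, ?_, ?_⟩
  · intro g _; split_ifs <;> exact ha
  · intro g _; rw [abs_lt]; split_ifs <;> omega
  · intro v hv' hvs hvt
    rw [hv, Finset.mem_insert, Finset.mem_singleton] at hv'
    rcases hv' with h | h <;> simp_all
  · show SignedGraph.excess _ _ _ _ H.s = -a
    unfold SignedGraph.excess
    rw [he]
    simp only [Finset.sum_singleton]
    rw [edge_term H e H.s a a hj]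
    simp [hsg]
  · show SignedGraph.excess _ _ _ _ H.t = a
    unfold SignedGraph.excess
    rw [he]
    simp only [Finset.sum_singleton]
    rw [edge_term H e H.t a a hj]
    simp [hsg, Ne.symm H.s_ne_t]

lemma d_pseudoflow (H : TTGraph) (h : IsUnbalanced2Cycle H) {p q : ℤ}
    (hp : p ≠ 0) (hq : q ≠ 0) (hp5 : -5 ≤ p ∧ p ≤ 5) (hq5 : -5 ≤ q ∧ q ≤ 5) :
    HasPseudoflow H (p - q) (p + q) := by
  obtain ⟨hv, e, f, hef, he, hje, hjf, hsf⟩ := h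
  have hall : ∀ g ∈ H.edges, H.toSignedGraph.Joins g H.s H.t := by
    intro g hg; rw [he, Finset.mem_insert, Finset.mem_singleton] at hg
    rcases hg with hg | hg <;> subst hg <;> assumption
  have hsum : ∀ v, SignedGraph.excess H.toSignedGraph
      (fun g => if H.sign g then (H.fst g != H.s) else true)
      (fun g => if H.sign g then (H.snd g != H.s) else true)
      (fun g => if H.sign g then p else q) v =
      ((if H.sign e then (if v = H.s then -p else if v = H.t then p else 0)
        else (if v = H.s then q else if v = H.t then q else 0)) +
       (if H.sign f then (if v = H.s then -p else if v = H.t then p else 0)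
        else (if v = H.s then q else if v = H.t then q else 0))) := by
    intro v
    unfold SignedGraph.excess
    rw [he, Finset.sum_pair hef]
    rw [edge_term H e v p q hje, edge_term H f v p q hjf]
  refine ⟨_, _, fun g => if H.sign g then p else q, std_orient H hall, ?_, ?_, ?_, ?_, ?_⟩
  · intro g _; split_ifs <;> assumption
  · intro g _; rw [abs_lt]; split_ifs <;> omega
  · intro v hv' hvs hvt
    rw [hv, Finset.mem_insert, Finset.mem_singleton] at hv'
    rcases hv' with h | h <;> simp_all
  · rw [hsum]
    cases hse : H.sign e <;> cases hsff : H.sign f <;> simp_all <;> ring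
  · rw [hsum]
    have := Ne.symm H.s_ne_t
    cases hse : H.sign e <;> cases hsff : H.sign f <;> simp_all <;> ring

/-- `(a,b)`-pseudoflow on the unbalanced 2-cycle, for `a ≡ b (mod 2)`,
`b ≠ ±a`. -/
lemma d_pseudoflow' (H : TTGraph) (h : IsUnbalanced2Cycle H) {a b : ℤ}
    (hpar : a % 2 = b % 2) (h1 : b ≠ a) (h2 : b ≠ -a)
    (ha5 : -5 ≤ a ∧ a ≤ 5) (hb5 : -5 ≤ b ∧ b ≤ 5) : HasPseudoflow H a b := by
  obtain ⟨p, q, rfl, rfl⟩ : ∃ p q : ℤ, a = p - q ∧ b = p + q := by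
    exact ⟨(a + b) / 2, (b - a) / 2, by omega, by omega⟩
  exact d_pseudoflow H h (by omega) (by omega) (by omega) (by omega)

lemma excess_vanish (H : SignedGraph) (o₁ o₂ : ℕ → Bool) (φ : ℕ → ℤ) {v : ℕ}
    (hv : v ∉ H.verts) : H.excess o₁ o₂ φ v = 0 := by
  unfold SignedGraph.excess
  apply Finset.sum_eq_zero
  intro e he
  have h1 : H.fst e ≠ v := fun h => hv (h ▸ H.fst_mem e he)
  have h2 : H.snd e ≠ v := fun h => hv (h ▸ H.snd_mem e he)
  simp [h1, h2]

lemma glue {G H₁ H₂ : TTGraph} (hS : IsSeriesConn2 G H₁ H₂) {a c b : ℤ}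
    (h₁ : HasPseudoflow H₁ a c) (h₂ : HasPseudoflow H₂ c b) :
    HasPseudoflow G a b := by
  classical
  obtain ⟨o₁, o₂, φ, P⟩ := h₁
  obtain ⟨p₁, p₂, ψ, Q⟩ := h₂
  have hmem12 : ∀ v, v ∈ H₁.verts → v ∈ H₂.verts → v = H₁.t := fun v h1 h2 =>
    Finset.mem_singleton.1 (hS.vert_inter ▸ Finset.mem_inter.2 ⟨h1, h2⟩)
  have hdisj := hS.edge_disj
  have hsplit : ∀ v, SignedGraph.excess G.toSignedGraph
      (fun e => if e ∈ H₁.edges then o₁ e else p₁ e)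
      (fun e => if e ∈ H₁.edges then o₂ e else p₂ e)
      (fun e => if e ∈ H₁.edges then φ e else ψ e) v =
      H₁.toSignedGraph.excess o₁ o₂ φ v + H₂.toSignedGraph.excess p₁ p₂ ψ v := by
    intro v
    unfold SignedGraph.excess
    rw [← hS.edge_union, Finset.sum_union hdisj]
    congr 1
    · apply Finset.sum_congr rfl
      intro e he
      obtain ⟨hf, hs, hg⟩ := hS.sub1.2.2 e he
      simp [he, hf, hs]
    · apply Finset.sum_congr rfl
      intro e he
      have hne : e ∉ H₁.edges := fun hh => (Finset.disjoint_left.mp hdisj hh) he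
      obtain ⟨hf, hs, hg⟩ := hS.sub2.2.2 e he
      simp [hne, hf, hs]
  refine ⟨fun e => if e ∈ H₁.edges then o₁ e else p₁ e,
          fun e => if e ∈ H₁.edges then o₂ e else p₂ e,
          fun e => if e ∈ H₁.edges then φ e else ψ e, ?_, ?_, ?_, ?_, ?_, ?_⟩
  case _ => -- orientation
    intro e he
    rw [← hS.edge_union, Finset.mem_union] at he
    rcases he with h | h
    · obtain ⟨hf, hs, hg⟩ := hS.sub1.2.2 e h
      have horr := P.orient e h
      constructor <;> intro hx <;> rw [← hg] at hx <;> simp only [if_pos h]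
      · exact horr.1 hx
      · exact horr.2 hx
    · have hne : e ∉ H₁.edges := fun hh => (Finset.disjoint_left.mp hdisj hh) h
      obtain ⟨hf, hs, hg⟩ := hS.sub2.2.2 e h
      have horr := Q.orient e h
      constructor <;> intro hx <;> rw [← hg] at hx <;> simp only [if_neg hne]
      · exact horr.1 hx
      · exact horr.2 hx
  case _ => -- nonzero
    intro e he
    rw [← hS.edge_union, Finset.mem_union] at he
    rcases he with h | h
    · simpa [h] using P.nonzero e h
    · have hne : e ∉ H₁.edges := fun hh => (Finset.disjoint_left.mp hdisj hh) h
      simpa [hne] using Q.nonzero e h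
  case _ => -- bounded
    intro e he
    rw [← hS.edge_union, Finset.mem_union] at he
    rcases he with h | h
    · simpa [h] using P.bounded e h
    · have hne : e ∉ H₁.edges := fun hh => (Finset.disjoint_left.mp hdisj hh) h
      simpa [hne] using Q.bounded e h
  case _ => -- conserve
    intro v hvmem hvs hvt
    rw [hsplit]
    by_cases hvt1 : v = H₁.t
    · subst hvt1
      rw [P.in_t]
      have hms : H₂.s = H₁.t := hS.mid.symm
      rw [← hms, Q.out_s]
      ring
    · rw [← hS.vert_union, Finset.mem_union] at hvmem
      rcases hvmem with h | h
      · have hnv2 : v ∉ H₂.verts := fun hh => hvt1 (hmem12 v h hh)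
        rw [P.conserve v h (fun hh => hvs (hh.trans hS.src.symm)) hvt1,
          excess_vanish _ _ _ _ hnv2]
        ring
      · have hnv1 : v ∉ H₁.verts := fun hh => hvt1 (hmem12 v hh h)
        rw [Q.conserve v h (fun hh => hvt1 (hh.trans hS.mid.symm))
          (fun hh => hvt (hh.trans hS.tgt.symm)), excess_vanish _ _ _ _ hnv1]
        ring
  case _ => -- out_s
    rw [hsplit, hS.src, P.out_s]
    have hnv2 : H₁.s ∉ H₂.verts := fun hh =>
      H₁.s_ne_t (hmem12 _ H₁.s_mem hh)
    rw [excess_vanish _ _ _ _ hnv2]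
    ring
  case _ => -- in_t
    rw [hsplit, hS.tgt, Q.in_t]
    have hnv1 : H₂.t ∉ H₁.verts := fun hh =>
      H₂.s_ne_t ((hmem12 _ hh H₂.t_mem).trans hS.mid).symm
    rw [excess_vanish _ _ _ _ hnv1]
    ring

def Piece (H : TTGraph) : Prop := IsPositiveK2 H ∨ IsUnbalanced2Cycle H

lemma not_both {H : TTGraph} (h1 : IsPositiveK2 H) (h2 : IsUnbalanced2Cycle H) :
    False := by
  obtain ⟨⟨_, e, he, _⟩, _⟩ := h1
  obtain ⟨_, e', f', hef, he', _, _, _⟩ := h2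
  have h1' : e' ∈ ({e} : Finset ℕ) := by rw [← he, he']; simp
  have h2' : f' ∈ ({e} : Finset ℕ) := by rw [← he, he']; simp
  rw [Finset.mem_singleton] at h1' h2'
  exact hef (h1'.trans h2'.symm)

def Step (H : TTGraph) (a b : ℤ) : Prop :=
  (IsPositiveK2 H ∧ a = b ∧ a ≠ 0 ∧ -5 ≤ a ∧ a ≤ 5) ∨
  (IsUnbalanced2Cycle H ∧ a % 2 = b % 2 ∧ b ≠ a ∧ b ≠ -a ∧
    -5 ≤ a ∧ a ≤ 5 ∧ -5 ≤ b ∧ b ≤ 5)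

lemma step_flow {H : TTGraph} {a b : ℤ} (h : Step H a b) : HasPseudoflow H a b := by
  rcases h with ⟨hk, heq, ha, h5⟩ | ⟨hd, hpar, h1, h2, ha1, ha2, hb1, hb2⟩
  · rw [← heq]; exact k2_pseudoflow H hk ha ⟨h5.1, h5.2⟩
  · exact d_pseudoflow' H hd hpar h1 h2 ⟨ha1, ha2⟩ ⟨hb1, hb2⟩

inductive Chain : List TTGraph → ℤ → ℤ → Prop
  | single {H a b} : Step H a b → Chain [H] a b
  | cons {H l a c b} : Step H a c → Chain l c b → Chain (H :: l) a b

lemma seriesConnList_ne_nil {G : TTGraph} {l} (h : IsSeriesConnList G l) :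
    l ≠ [] := by
  cases h <;> simp

lemma chain_flow {G : TTGraph} {l : List TTGraph} (h : IsSeriesConnList G l) :
    ∀ {a b : ℤ}, Chain l a b → HasPseudoflow G a b := by
  induction h with
  | two hS =>
    intro a b hc
    cases hc with
    | cons s1 hc2 =>
      cases hc2 with
      | single s2 => exact glue hS (step_flow s1) (step_flow s2)
      | cons s2 hc3 => cases hc3
  | cons hS h' ih =>
    intro a b hc
    cases hc with
    | single s => exact absurd rfl (seriesConnList_ne_nil h')
    | cons s hc' => exact glue hS (step_flow s) (ih hc')

open Classical in
noncomputable def nD : List TTGraph → ℕ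
  | [] => 0
  | H :: l => (if IsUnbalanced2Cycle H then 1 else 0) + nD l

lemma nD_eq_zero : ∀ {l : List TTGraph}, nD l = 0 →
    ∀ H ∈ l, ¬ IsUnbalanced2Cycle H := by
  intro l
  induction l with
  | nil => intro _ H hH; simp at hH
  | cons H l ih =>
    intro h H' hH'
    simp only [nD] at h
    rcases List.mem_cons.1 hH' with rfl | hm
    · intro hd; rw [if_pos hd] at h; omega
    · exact ih (by omega) H' hm
def GOOD (k : ℕ) (c b : ℤ) : Prop :=
  (k = 0 ∧ c = b ∧ b ≠ 0) ∨
  (k = 1 ∧ b ≠ c ∧ b ≠ -c) ∨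
  (2 ≤ k ∧ k % 2 = 1 ∧ b ≠ c ∧ b ≠ -c) ∨
  (2 ≤ k ∧ k % 2 = 0 ∧ (b = c ∨ b = -c)) ∨
  (2 ≤ k ∧ (c % 2 = 1 ∨ c = 0 ∨ b = 0))

lemma chain_exists : ∀ (l : List TTGraph), l ≠ [] → (∀ X ∈ l, Piece X) →
    ∀ c b : ℤ, -5 ≤ c → c ≤ 5 → -5 ≤ b → b ≤ 5 → c % 2 = b % 2 →
    ((∃ X, l.head? = some X ∧ IsPositiveK2 X) → c ≠ 0) →
    ((∃ X, l.getLast? = some X ∧ IsPositiveK2 X) → b ≠ 0) →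
    GOOD (nD l) c b → Chain l c b := by
  intro l
  induction l with
  | nil => intro h; exact absurd rfl h
  | cons H l ih =>
    intro _ hp c b hc1 hc2 hb1 hb2 hpar hH1 hH2 hg
    have hPH : Piece H := hp H List.mem_cons_self
    cases l with
    | nil =>
      by_cases hD : IsUnbalanced2Cycle H
      · have hk : nD [H] = 1 := by simp [nD, hD]
        rw [hk] at hg
        have hbc : b ≠ c ∧ b ≠ -c := by
          rcases hg with ⟨h,_⟩|⟨_,h1,h2⟩|⟨h,_⟩|⟨h,_⟩|⟨h,_⟩ <;>
            first | omega | exact ⟨h1, h2⟩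
        exact Chain.single (Or.inr ⟨hD, hpar, hbc.1, hbc.2, hc1, hc2, hb1, hb2⟩)
      · have hK : IsPositiveK2 H := hPH.resolve_right hD
        have hk : nD [H] = 0 := by simp [nD, hD]
        rw [hk] at hg
        have hcb : c = b ∧ b ≠ 0 := by
          rcases hg with ⟨_,h1,h2⟩|⟨h,_⟩|⟨h,_⟩|⟨h,_⟩|⟨h,_⟩ <;>
            first | omega | exact ⟨h1, h2⟩
        exact Chain.single (Or.inl ⟨hK, hcb.1, by omega, hc1, hc2⟩)
    | cons H' l' =>
      have htne : H' :: l' ≠ [] := by simp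
      have hpt : ∀ X ∈ H' :: l', Piece X := fun X hX => hp X (List.mem_cons_of_mem H hX)
      have hH2' : (∃ X, (H' :: l').getLast? = some X ∧ IsPositiveK2 X) → b ≠ 0 := by
        intro hx; apply hH2; rwa [List.getLast?_cons_cons]
      by_cases hD : IsUnbalanced2Cycle H
      · -- head is D
        have hk : nD (H :: H' :: l') = nD (H' :: l') + 1 := by
          simp [nD, hD]; omega
        rw [hk] at hg
        have hb0 : nD (H' :: l') = 0 → b ≠ 0 := by
          intro hk0
          apply hH2'
          have hall := nD_eq_zero hk0
          refine ⟨(H' :: l').getLast (by simp), ?_, ?_⟩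
          · exact List.getLast?_eq_getLast (by simp)
          · have hmem := List.getLast_mem (l := H' :: l') (by simp)
            exact (hpt _ hmem).resolve_right (hall _ hmem)
        suffices hmid : ∃ m : ℤ, m ≠ 0 ∧ m ≠ c ∧ m ≠ -c ∧ -5 ≤ m ∧ m ≤ 5 ∧
            m % 2 = b % 2 ∧ GOOD (nD (H' :: l')) m b by
          obtain ⟨m, hm0, hmc, hmc', hm1, hm2, hmp, hmg⟩ := hmid
          exact Chain.cons (Or.inr ⟨hD, by omega, hmc, hmc', hc1, hc2, hm1, hm2⟩)
            (ih htne hpt m b hm1 hm2 hb1 hb2 hmp (fun _ => hm0) hH2' hmg)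
        set k' := nD (H' :: l') with hkdef
        rcases hg with ⟨h0, _, _⟩ | ⟨hk1, hbc, hbc'⟩ | ⟨hk2, hodd, hbc, hbc'⟩ |
          ⟨hk2, heven, hbor⟩ | ⟨hk2, hor⟩
        · omega
        · -- total one D: m := b
          have hk0 : k' = 0 := by omega
          have hb := hb0 hk0
          exact ⟨b, hb, hbc, hbc', hb1, hb2, rfl, Or.inl ⟨hk0, rfl, hb⟩⟩
        · -- k odd ≥ 3, b ≠ ±c; k' even ≥ 2
          have hk'2 : 2 ≤ k' := by omega
          by_cases hbz : b = 0
          · obtain ⟨hop, ho1, ho2, hoz, hoc, hoc'⟩ := other_props c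
            exact ⟨other c, hoz, hoc, hoc', ho1, ho2, by omega,
              Or.inr (Or.inr (Or.inr (Or.inr ⟨hk'2, Or.inr (Or.inr hbz)⟩)))⟩
          · exact ⟨b, hbz, hbc, hbc', hb1, hb2, rfl,
              Or.inr (Or.inr (Or.inr (Or.inl ⟨hk'2, by omega, Or.inl rfl⟩)))⟩
        · -- k even ≥ 2, b = ±c; k' odd ≥ 1; m := other c
          obtain ⟨hop, ho1, ho2, hoz, hoc, hoc'⟩ := other_props c
          have hbm : b ≠ other c ∧ b ≠ -(other c) := by
            rcases hbor with rfl | rfl <;> constructor <;> omega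
          have hgood : GOOD k' (other c) b := by
            rcases Nat.lt_or_ge k' 2 with h2 | h2
            · exact Or.inr (Or.inl ⟨by omega, hbm.1, hbm.2⟩)
            · exact Or.inr (Or.inr (Or.inl ⟨h2, by omega, hbm.1, hbm.2⟩))
          exact ⟨other c, hoz, hoc, hoc', ho1, ho2, by omega, hgood⟩
        · -- branch 5
          have hk'1 : 1 ≤ k' := by omega
          rcases hor with hcodd | hc0 | hbz
          · -- c odd: m := third c b
            have hbodd : b % 2 = 1 := by omega
            obtain ⟨t1, t2, t3, t4, t5, t6, t7, t8⟩ :=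
              third_props hcodd hbodd ⟨hc1, hc2⟩ ⟨hb1, hb2⟩
            have hgood : GOOD k' (third c b) b := by
              rcases Nat.lt_or_ge k' 2 with h2 | h2
              · exact Or.inr (Or.inl ⟨by omega, by omega, by omega⟩)
              · exact Or.inr (Or.inr (Or.inr (Or.inr ⟨h2, Or.inl t1⟩)))
            exact ⟨third c b, t4, t5, t6, t2, t3, by omega, hgood⟩
          · -- c = 0
            by_cases hbz : b = 0
            · refine ⟨2, by omega, by omega, by omega, by omega, by omega, by omega, ?_⟩
              rcases Nat.lt_or_ge k' 2 with h2 | h2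
              · exact Or.inr (Or.inl ⟨by omega, by omega, by omega⟩)
              · exact Or.inr (Or.inr (Or.inr (Or.inr ⟨h2, Or.inr (Or.inr hbz)⟩)))
            · rcases Nat.lt_or_ge k' 2 with h2 | h2
              · obtain ⟨hop, ho1, ho2, hoz, hob, hob'⟩ := other_props b
                exact ⟨other b, hoz, by omega, by omega, ho1, ho2, by omega,
                  Or.inr (Or.inl ⟨by omega, by omega, by omega⟩)⟩
              · by_cases hke : k' % 2 = 0
                · exact ⟨b, hbz, by omega, by omega, hb1, hb2, rfl,
                    Or.inr (Or.inr (Or.inr (Or.inl ⟨h2, hke, Or.inl rfl⟩)))⟩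
                · obtain ⟨hop, ho1, ho2, hoz, hob, hob'⟩ := other_props b
                  exact ⟨other b, hoz, by omega, by omega, ho1, ho2, by omega,
                    Or.inr (Or.inr (Or.inl ⟨h2, by omega, by omega, by omega⟩))⟩
          · -- b = 0: m := other c
            obtain ⟨hop, ho1, ho2, hoz, hoc, hoc'⟩ := other_props c
            have hgood : GOOD k' (other c) b := by
              rcases Nat.lt_or_ge k' 2 with h2 | h2
              · exact Or.inr (Or.inl ⟨by omega, by omega, by omega⟩)
              · exact Or.inr (Or.inr (Or.inr (Or.inr ⟨h2, Or.inr (Or.inr hbz)⟩)))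
            exact ⟨other c, hoz, hoc, hoc', ho1, ho2, by omega, hgood⟩
      · -- head is a positive K₂
        have hK : IsPositiveK2 H := hPH.resolve_right hD
        have hc0 : c ≠ 0 := hH1 ⟨H, rfl, hK⟩
        have hk : nD (H :: H' :: l') = nD (H' :: l') := by simp [nD, hD]
        rw [hk] at hg
        exact Chain.cons (Or.inl ⟨hK, rfl, hc0, hc1, hc2⟩)
          (ih htne hpt c b hc1 hc2 hb1 hb2 hpar (fun _ => hc0) hH2' hg)

lemma mem_inter_eq {G H₁ H₂ : TTGraph} (hS : IsSeriesConn2 G H₁ H₂) {v : ℕ}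
    (h1 : v ∈ H₁.verts) (h2 : v ∈ H₂.verts) : v = H₁.t :=
  Finset.mem_singleton.1 (hS.vert_inter ▸ Finset.mem_inter.2 ⟨h1, h2⟩)

lemma beta_k2 {H : TTGraph} (h : IsSignedK2 H) : H.toSignedGraph.beta = 0 := by
  obtain ⟨hv, e, he, hj⟩ := h
  unfold SignedGraph.beta
  rw [Finset.card_eq_zero]
  apply Finset.eq_empty_of_forall_notMem
  rintro ⟨x, y⟩ hxy
  rw [Finset.mem_filter, Finset.mem_product] at hxy
  obtain ⟨⟨hx, hy⟩, hlt, _⟩ := hxy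
  rw [he, Finset.mem_singleton] at hx hy
  omega

lemma beta_d {H : TTGraph} (h : IsUnbalanced2Cycle H) : H.toSignedGraph.beta = 1 := by
  obtain ⟨hv, e, f, hef, he, hje, hjf, hsf⟩ := h
  have hst := H.s_ne_t
  have hfse : H.fst e ≠ H.snd e := by
    rcases hje with ⟨h1, h2⟩ | ⟨h1, h2⟩ <;> rw [h1, h2] <;> omega
  have hfsf : H.fst f ≠ H.snd f := by
    rcases hjf with ⟨h1, h2⟩ | ⟨h1, h2⟩ <;> rw [h1, h2] <;> omega
  have hmatch : ∀ x y : ℕ, H.toSignedGraph.Joins x H.s H.t →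
      H.toSignedGraph.Joins y H.s H.t →
      ((H.fst x = H.fst y ∧ H.snd x = H.snd y) ∨
       (H.fst x = H.snd y ∧ H.snd x = H.fst y)) := by
    intro x y h1 h2
    rcases h1 with ⟨a1, a2⟩ | ⟨a1, a2⟩ <;> rcases h2 with ⟨b1, b2⟩ | ⟨b1, b2⟩ <;>
      simp [a1, a2, b1, b2]
  unfold SignedGraph.beta
  rcases Nat.lt_trichotomy e f with hlt | heq | hlt
  · have hone : (((H.edges ×ˢ H.edges).filter fun p => p.1 < p.2 ∧
        H.fst p.1 ≠ H.snd p.1 ∧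
        ((H.fst p.1 = H.fst p.2 ∧ H.snd p.1 = H.snd p.2) ∨
         (H.fst p.1 = H.snd p.2 ∧ H.snd p.1 = H.fst p.2)))) = {(e, f)} := by
      ext ⟨x, y⟩
      rw [Finset.mem_filter, Finset.mem_product, Finset.mem_singleton]
      constructor
      · rintro ⟨⟨hx, hy⟩, hlt', _, _⟩
        rw [he, Finset.mem_insert, Finset.mem_singleton] at hx hy
        have : x = e ∧ y = f := by omega
        rw [this.1, this.2]
      · rintro hxy
        rw [Prod.ext_iff] at hxy
        obtain ⟨hx, hy⟩ := hxy
        rw [hx, hy]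
        refine ⟨⟨?_, ?_⟩, hlt, hfse, hmatch e f hje hjf⟩
        · rw [he]; exact Finset.mem_insert_self _ _
        · rw [he]; exact Finset.mem_insert_of_mem (Finset.mem_singleton_self _)
    rw [hone, Finset.card_singleton]
  · exact absurd heq hef
  · have hone : (((H.edges ×ˢ H.edges).filter fun p => p.1 < p.2 ∧
        H.fst p.1 ≠ H.snd p.1 ∧
        ((H.fst p.1 = H.fst p.2 ∧ H.snd p.1 = H.snd p.2) ∨
         (H.fst p.1 = H.snd p.2 ∧ H.snd p.1 = H.fst p.2)))) = {(f, e)} := by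
      ext ⟨x, y⟩
      rw [Finset.mem_filter, Finset.mem_product, Finset.mem_singleton]
      constructor
      · rintro ⟨⟨hx, hy⟩, hlt', _, _⟩
        rw [he, Finset.mem_insert, Finset.mem_singleton] at hx hy
        have : x = f ∧ y = e := by omega
        rw [this.1, this.2]
      · rintro hxy
        rw [Prod.ext_iff] at hxy
        obtain ⟨hx, hy⟩ := hxy
        rw [hx, hy]
        refine ⟨⟨?_, ?_⟩, hlt, hfsf, hmatch f e hjf hje⟩
        · rw [he]; exact Finset.mem_insert_of_mem (Finset.mem_singleton_self _)
        · rw [he]; exact Finset.mem_insert_self _ _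
    rw [hone, Finset.card_singleton]

lemma beta_split {G H₁ H₂ : TTGraph} (hS : IsSeriesConn2 G H₁ H₂) :
    G.toSignedGraph.beta = H₁.toSignedGraph.beta + H₂.toSignedGraph.beta := by
  have hgen : ∀ x y : ℕ, x ∈ H₁.edges → y ∈ H₂.edges →
      G.fst x ≠ G.snd x →
      ¬((G.fst x = G.fst y ∧ G.snd x = G.snd y) ∨
        (G.fst x = G.snd y ∧ G.snd x = G.fst y)) := by
    intro x y hx hy hne hm
    obtain ⟨f1, s1, _⟩ := hS.sub1.2.2 x hx
    obtain ⟨f2, s2, _⟩ := hS.sub2.2.2 y hy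
    have hv1 : G.fst x ∈ H₁.verts := f1 ▸ H₁.fst_mem x hx
    have hv2 : G.snd x ∈ H₁.verts := s1 ▸ H₁.snd_mem x hx
    have hw1 : G.fst y ∈ H₂.verts := f2 ▸ H₂.fst_mem y hy
    have hw2 : G.snd y ∈ H₂.verts := s2 ▸ H₂.snd_mem y hy
    rcases hm with ⟨q1, q2⟩ | ⟨q1, q2⟩
    · have m1 : G.fst x = H₁.t := mem_inter_eq hS hv1 (q1 ▸ hw1)
      have m2 : G.snd x = H₁.t := mem_inter_eq hS hv2 (q2 ▸ hw2)
      exact hne (m1.trans m2.symm)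
    · have m1 : G.fst x = H₁.t := mem_inter_eq hS hv1 (q1 ▸ hw2)
      have m2 : G.snd x = H₁.t := mem_inter_eq hS hv2 (q2 ▸ hw1)
      exact hne (m1.trans m2.symm)
  have hgen' : ∀ x y : ℕ, x ∈ H₂.edges → y ∈ H₁.edges →
      G.fst x ≠ G.snd x →
      ¬((G.fst x = G.fst y ∧ G.snd x = G.snd y) ∨
        (G.fst x = G.snd y ∧ G.snd x = G.fst y)) := by
    intro x y hx hy hne hm
    have hney : G.fst y ≠ G.snd y := by
      rcases hm with ⟨q1, q2⟩ | ⟨q1, q2⟩ <;> omega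
    apply hgen y x hy hx hney
    rcases hm with ⟨q1, q2⟩ | ⟨q1, q2⟩
    · exact Or.inl ⟨q1.symm, q2.symm⟩
    · exact Or.inr ⟨q2.symm, q1.symm⟩
  unfold SignedGraph.beta
  rw [← hS.edge_union]
  have hsplit : (((H₁.edges ∪ H₂.edges) ×ˢ (H₁.edges ∪ H₂.edges)).filter fun p =>
        p.1 < p.2 ∧ G.fst p.1 ≠ G.snd p.1 ∧
        ((G.fst p.1 = G.fst p.2 ∧ G.snd p.1 = G.snd p.2) ∨
         (G.fst p.1 = G.snd p.2 ∧ G.snd p.1 = G.fst p.2))) =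
      ((H₁.edges ×ˢ H₁.edges).filter fun p =>
        p.1 < p.2 ∧ G.fst p.1 ≠ G.snd p.1 ∧
        ((G.fst p.1 = G.fst p.2 ∧ G.snd p.1 = G.snd p.2) ∨
         (G.fst p.1 = G.snd p.2 ∧ G.snd p.1 = G.fst p.2))) ∪
      ((H₂.edges ×ˢ H₂.edges).filter fun p =>
        p.1 < p.2 ∧ G.fst p.1 ≠ G.snd p.1 ∧
        ((G.fst p.1 = G.fst p.2 ∧ G.snd p.1 = G.snd p.2) ∨
         (G.fst p.1 = G.snd p.2 ∧ G.snd p.1 = G.fst p.2))) := by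
    ext ⟨x, y⟩
    simp only [Finset.mem_filter, Finset.mem_product, Finset.mem_union]
    constructor
    · rintro ⟨⟨hx, hy⟩, hlt, hne, hm⟩
      rcases hx with hx | hx <;> rcases hy with hy | hy
      · exact Or.inl ⟨⟨hx, hy⟩, hlt, hne, hm⟩
      · exact absurd hm (hgen x y hx hy hne)
      · exact absurd hm (hgen' x y hx hy hne)
      · exact Or.inr ⟨⟨hx, hy⟩, hlt, hne, hm⟩
    · rintro (⟨⟨hx, hy⟩, hP⟩ | ⟨⟨hx, hy⟩, hP⟩)
      · exact ⟨⟨Or.inl hx, Or.inl hy⟩, hP⟩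
      · exact ⟨⟨Or.inr hx, Or.inr hy⟩, hP⟩
  rw [hsplit, Finset.card_union_of_disjoint]
  · congr 1
    · congr 1
      apply Finset.filter_congr
      rintro ⟨x, y⟩ hx
      rw [Finset.mem_product] at hx
      obtain ⟨f1, s1, _⟩ := hS.sub1.2.2 x hx.1
      obtain ⟨f2, s2, _⟩ := hS.sub1.2.2 y hx.2
      rw [f1, s1, f2, s2]
    · congr 1
      apply Finset.filter_congr
      rintro ⟨x, y⟩ hx
      rw [Finset.mem_product] at hx
      obtain ⟨f1, s1, _⟩ := hS.sub2.2.2 x hx.1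
      obtain ⟨f2, s2, _⟩ := hS.sub2.2.2 y hx.2
      rw [f1, s1, f2, s2]
  · rw [Finset.disjoint_left]
    rintro ⟨x, y⟩ hx hy
    rw [Finset.mem_filter, Finset.mem_product] at hx hy
    exact (Finset.disjoint_left.mp hS.edge_disj hx.1.1) hy.1.1

lemma beta_eq_nD {G : TTGraph} {l : List TTGraph} (h : IsSeriesConnList G l) :
    (∀ X ∈ l, Piece X) → G.toSignedGraph.beta = nD l := by
  classical
  induction h with
  | two hS =>
    intro hp
    rename_i G' H₁ H₂
    rw [beta_split hS]
    have e1 : H₁.toSignedGraph.beta = if IsUnbalanced2Cycle H₁ then 1 else 0 := by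
      rcases hp H₁ (by simp) with hK | hD
      · rw [if_neg (fun hD => not_both hK hD), beta_k2 hK.1]
      · rw [if_pos hD, beta_d hD]
    have e2 : H₂.toSignedGraph.beta = if IsUnbalanced2Cycle H₂ then 1 else 0 := by
      rcases hp H₂ (by simp) with hK | hD
      · rw [if_neg (fun hD => not_both hK hD), beta_k2 hK.1]
      · rw [if_pos hD, beta_d hD]
    simp [nD, e1, e2]
  | cons hS h' ih =>
    intro hp
    rename_i G0 G' H l'
    rw [beta_split hS]
    have e1 : H.toSignedGraph.beta = if IsUnbalanced2Cycle H then 1 else 0 := by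
      rcases hp H (by simp) with hK | hD
      · rw [if_neg (fun hD => not_both hK hD), beta_k2 hK.1]
      · rw [if_pos hD, beta_d hD]
    rw [ih (fun X hX => hp X (List.mem_cons_of_mem H hX))]
    simp [nD, e1]

lemma deg_k2_s {H : TTGraph} (hK : IsPositiveK2 H) :
    H.toSignedGraph.degree H.s = 1 := by
  obtain ⟨⟨hv, e, he, hj⟩, _⟩ := hK
  unfold SignedGraph.degree
  rw [he, Finset.sum_singleton]
  have hst := H.s_ne_t
  rcases hj with ⟨h1, h2⟩ | ⟨h1, h2⟩ <;> rw [h1, h2] <;>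
    simp [hst, Ne.symm hst]

lemma deg_k2_t {H : TTGraph} (hK : IsPositiveK2 H) :
    H.toSignedGraph.degree H.t = 1 := by
  obtain ⟨⟨hv, e, he, hj⟩, _⟩ := hK
  unfold SignedGraph.degree
  rw [he, Finset.sum_singleton]
  have hst := H.s_ne_t
  rcases hj with ⟨h1, h2⟩ | ⟨h1, h2⟩ <;> rw [h1, h2] <;>
    simp [hst, Ne.symm hst]

lemma deg_s_aux {G H X : TTGraph} (hS : IsSeriesConn2 G H X) :
    G.toSignedGraph.degree G.s = H.toSignedGraph.degree H.s := by
  unfold SignedGraph.degree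
  rw [← hS.edge_union, Finset.sum_union hS.edge_disj, hS.src]
  have hns : H.s ∉ X.verts := fun hh => H.s_ne_t (mem_inter_eq hS H.s_mem hh)
  have h2 : ∑ e ∈ X.edges, ((if G.fst e = H.s then 1 else 0) +
      (if G.snd e = H.s then 1 else 0)) = 0 := by
    apply Finset.sum_eq_zero
    intro e hee
    obtain ⟨f1, s1, _⟩ := hS.sub2.2.2 e hee
    have hv1 : G.fst e ∈ X.verts := f1 ▸ X.fst_mem e hee
    have hv2 : G.snd e ∈ X.verts := s1 ▸ X.snd_mem e hee
    have hne1 : G.fst e ≠ H.s := fun hh => hns (hh ▸ hv1)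
    have hne2 : G.snd e ≠ H.s := fun hh => hns (hh ▸ hv2)
    rw [if_neg hne1, if_neg hne2]
    rfl
  rw [h2, Nat.add_zero]
  apply Finset.sum_congr rfl
  intro e hee
  obtain ⟨f1, s1, _⟩ := hS.sub1.2.2 e hee
  rw [f1, s1]

lemma deg_t_aux {G H X : TTGraph} (hS : IsSeriesConn2 G H X) :
    G.toSignedGraph.degree G.t = X.toSignedGraph.degree X.t := by
  unfold SignedGraph.degree
  rw [← hS.edge_union, Finset.sum_union hS.edge_disj, hS.tgt]
  have hns : X.t ∉ H.verts := fun hh =>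
    X.s_ne_t ((mem_inter_eq hS hh X.t_mem).trans hS.mid).symm
  have h1 : ∑ e ∈ H.edges, ((if G.fst e = X.t then 1 else 0) +
      (if G.snd e = X.t then 1 else 0)) = 0 := by
    apply Finset.sum_eq_zero
    intro e hee
    obtain ⟨f1, s1, _⟩ := hS.sub1.2.2 e hee
    have hv1 : G.fst e ∈ H.verts := f1 ▸ H.fst_mem e hee
    have hv2 : G.snd e ∈ H.verts := s1 ▸ H.snd_mem e hee
    have hne1 : G.fst e ≠ X.t := fun hh => hns (hh ▸ hv1)
    have hne2 : G.snd e ≠ X.t := fun hh => hns (hh ▸ hv2)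
    rw [if_neg hne1, if_neg hne2]
    rfl
  rw [h1, Nat.zero_add]
  apply Finset.sum_congr rfl
  intro e hee
  obtain ⟨f1, s1, _⟩ := hS.sub2.2.2 e hee
  rw [f1, s1]

lemma head_series {G : TTGraph} {l : List TTGraph} (h : IsSeriesConnList G l)
    {H : TTGraph} (hh : l.head? = some H) : ∃ X, IsSeriesConn2 G H X := by
  cases h with
  | two hS =>
    rename_i H₁ H₂
    simp at hh
    exact ⟨H₂, hh ▸ hS⟩
  | cons hS h' =>
    rename_i G' H0 l0
    simp at hh
    exact ⟨G', hh ▸ hS⟩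

lemma deg_t_one {G : TTGraph} {l : List TTGraph} (h : IsSeriesConnList G l) :
    ∀ {L : TTGraph}, l.getLast? = some L → IsPositiveK2 L →
    G.toSignedGraph.degree G.t = 1 := by
  induction h with
  | two hS =>
    intro L hlast hK
    rename_i H₁ H₂
    simp at hlast
    rw [deg_t_aux hS, hlast]
    exact deg_k2_t hK
  | cons hS h' ih =>
    intro L hlast hK
    rename_i G0 G' H l'
    rcases l' with _ | ⟨H', l''⟩
    · exact absurd rfl (seriesConnList_ne_nil h')
    · rw [List.getLast?_cons_cons] at hlast
      rw [deg_t_aux hS]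
      exact ih hlast hK

lemma beta_pos (G : TTGraph) (hnt : 2 < G.verts.card)
    (h2c : ∀ v ∈ G.verts, v ≠ G.s → v ≠ G.t → G.toSignedGraph.In2Cycle v) :
    1 ≤ G.toSignedGraph.beta := by
  have hex : ∃ v ∈ G.verts, v ≠ G.s ∧ v ≠ G.t := by
    by_contra hcon
    push_neg at hcon
    have hsub : G.verts ⊆ {G.s, G.t} := by
      intro v hv
      rw [Finset.mem_insert, Finset.mem_singleton]
      by_cases h1 : v = G.s
      · exact Or.inl h1
      · exact Or.inr (hcon v hv h1)
    have h1 := Finset.card_le_card hsub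
    have h2 : ({G.s, G.t} : Finset ℕ).card ≤ 2 := by
      apply le_trans (Finset.card_insert_le _ _)
      simp
    omega
  obtain ⟨v, hv, hvs, hvt⟩ := hex
  obtain ⟨e, he, f, hf, ⟨hef, hm⟩, hne, _⟩ := h2c v hv hvs hvt
  unfold SignedGraph.beta
  rw [Nat.succ_le_iff, Finset.card_pos]
  rcases Nat.lt_trichotomy e f with hlt | heq | hlt
  · exact ⟨(e, f), Finset.mem_filter.2 ⟨Finset.mem_product.2 ⟨he, hf⟩, hlt, hne, hm⟩⟩
  · exact absurd heq hef
  · have h1 : G.fst f ≠ G.snd f := by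
      rcases hm with ⟨q1, q2⟩ | ⟨q1, q2⟩ <;> omega
    have h2 : (G.fst f = G.fst e ∧ G.snd f = G.snd e) ∨
        (G.fst f = G.snd e ∧ G.snd f = G.fst e) := by
      rcases hm with ⟨q1, q2⟩ | ⟨q1, q2⟩
      · exact Or.inl ⟨q1.symm, q2.symm⟩
      · exact Or.inr ⟨q2.symm, q1.symm⟩
    exact ⟨(f, e), Finset.mem_filter.2 ⟨Finset.mem_product.2 ⟨hf, he⟩, hlt, h1, h2⟩⟩

end StringPf

/-- Pseudoflows in nontrivial strings (Lemma 11 of the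
paper). -/
theorem string_pseudoflow (G : TTGraph) (hstr : IsString G)
    (hnt : 2 < G.verts.card) (a b : ℤ) (ha : a ∈ I5) (hb : b ∈ I5)
    (hpar : a % 2 = b % 2) (hvalid : ValidPair G a b)
    (h : (Odd G.toSignedGraph.beta ∧ a ≠ b ∧ a ≠ -b) ∨
         (Even G.toSignedGraph.beta ∧ (a = b ∨ a = -b)) ∨
         (2 ≤ G.toSignedGraph.beta ∧ (Odd a ∨ a = 0 ∨ b = 0))) :
    HasPseudoflow G a b := by
  obtain ⟨hstruct, h2c⟩ := hstr
  have hcard2 : ∀ _ : G.verts = {G.s, G.t}, False := by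
    intro hv
    rw [hv] at hnt
    have h2 : ({G.s, G.t} : Finset ℕ).card ≤ 2 := by
      apply le_trans (Finset.card_insert_le _ _)
      simp
    omega
  rcases hstruct with hK | hD | ⟨l, hconn, hpieces⟩
  · exact (hcard2 hK.1.1).elim
  · exact (hcard2 hD.1).elim
  · have hb1 : 1 ≤ G.toSignedGraph.beta := StringPf.beta_pos G hnt h2c
    have hbeq : G.toSignedGraph.beta = StringPf.nD l := StringPf.beta_eq_nD hconn hpieces
    rw [I5, Finset.mem_Icc] at ha hb
    have hH1 : (∃ X, l.head? = some X ∧ IsPositiveK2 X) → a ≠ 0 := by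
      rintro ⟨X, hhead, hK⟩ ha0
      obtain ⟨Y, hS⟩ := StringPf.head_series hconn hhead
      have hdeg : G.toSignedGraph.degree G.s = 1 := by
        rw [StringPf.deg_s_aux hS]
        have hsx : G.s = X.s := hS.src
        exact StringPf.deg_k2_s hK
      rcases hvalid.1 with hcon | hcon
      · exact hcon ha0
      · omega
    have hH2 : (∃ X, l.getLast? = some X ∧ IsPositiveK2 X) → b ≠ 0 := by
      rintro ⟨X, hlastq, hK⟩ hb0
      have hdeg := StringPf.deg_t_one hconn hlastq hK
      rcases hvalid.2 with hcon | hcon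
      · exact hcon hb0
      · omega
    have hgood : StringPf.GOOD (StringPf.nD l) a b := by
      rw [← hbeq]
      rcases h with ⟨hodd, h1, h2⟩ | ⟨heven, hor⟩ | ⟨h2k, hor⟩
      · rw [Nat.odd_iff] at hodd
        rcases Nat.lt_or_ge G.toSignedGraph.beta 2 with hlt | hge
        · exact Or.inr (Or.inl ⟨by omega, by omega, by omega⟩)
        · exact Or.inr (Or.inr (Or.inl ⟨hge, hodd, by omega, by omega⟩))
      · rw [Nat.even_iff] at heven
        refine Or.inr (Or.inr (Or.inr (Or.inl ⟨by omega, heven, ?_⟩)))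
        rcases hor with h1 | h1
        · exact Or.inl h1.symm
        · exact Or.inr (by omega)
      · refine Or.inr (Or.inr (Or.inr (Or.inr ⟨h2k, ?_⟩)))
        rcases hor with ho | h1 | h1
        · exact Or.inl (Int.odd_iff.mp ho)
        · exact Or.inr (Or.inl h1)
        · exact Or.inr (Or.inr h1)
    exact StringPf.chain_flow hconn
      (StringPf.chain_exists l (StringPf.seriesConnList_ne_nil hconn) hpieces a b
        (by omega) (by omega) (by omega) (by omega) hpar hH1 hH2 hgood)
end

section
/- Let G be a necklace and let a, b ∈ I5 = {−5,…,5} be integers with a ≡ b (mod 2). Then G admits an (a,b)-pseudoflow if either a ≠ b and a ≠ −b, or a = b = 0 and β(G) ≥ 2. -/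
/-! ### Auxiliary development for the necklace pseudoflow theorem -/

section NecklaceAux

open Finset

/-- Excess of a vertex not in the graph is zero. -/
lemma SignedGraph.excess_eq_zero (A : SignedGraph) (o₁ o₂ : ℕ → Bool) (φ : ℕ → ℤ)
    {v : ℕ} (hv : v ∉ A.verts) : A.excess o₁ o₂ φ v = 0 := by
  refine Finset.sum_eq_zero fun e he => ?_
  have h1 : ¬ A.fst e = v := fun h => hv (h ▸ A.fst_mem e he)
  have h2 : ¬ A.snd e = v := fun h => hv (h ▸ A.snd_mem e he)
  rw [if_neg h1, if_neg h2, add_zero]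

lemma SignedGraph.excess_union {G A B : SignedGraph}
    (hA : A.IsSubgraph G) (hB : B.IsSubgraph G)
    (hu : A.edges ∪ B.edges = G.edges) (hd : Disjoint A.edges B.edges)
    (o₁ o₂ p₁ p₂ : ℕ → Bool) (φ ψ : ℕ → ℤ) (v : ℕ) :
    G.excess (fun e => if e ∈ A.edges then o₁ e else p₁ e)
      (fun e => if e ∈ A.edges then o₂ e else p₂ e)
      (fun e => if e ∈ A.edges then φ e else ψ e) v
      = A.excess o₁ o₂ φ v + B.excess p₁ p₂ ψ v := by
  unfold SignedGraph.excess
  rw [← hu, Finset.sum_union hd]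
  congr 1
  · refine Finset.sum_congr rfl fun e he => ?_
    obtain ⟨h1, h2, _⟩ := hA.2.2 e he
    simp [he, h1, h2]
  · refine Finset.sum_congr rfl fun e he => ?_
    obtain ⟨h1, h2, _⟩ := hB.2.2 e he
    have hne : e ∉ A.edges := Finset.disjoint_right.mp hd he
    simp [hne, h1, h2]

/-- Gluing pseudoflows along a series connection. -/
lemma series_glue {G A B : TTGraph} (hc : IsSeriesConn2 G A B) {x y z : ℤ}
    (h1 : HasPseudoflow A x y) (h2 : HasPseudoflow B y z) :
    HasPseudoflow G x z := by
  obtain ⟨o₁, o₂, φ, pf⟩ := h1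
  obtain ⟨p₁, p₂, ψ, qf⟩ := h2
  refine ⟨fun e => if e ∈ A.edges then o₁ e else p₁ e,
    fun e => if e ∈ A.edges then o₂ e else p₂ e,
    fun e => if e ∈ A.edges then φ e else ψ e, ?_, ?_, ?_, ?_, ?_, ?_⟩
  · intro e he
    rw [← hc.edge_union] at he
    rcases Finset.mem_union.mp he with hA | hB
    · obtain ⟨_, _, hs⟩ := hc.sub1.2.2 e hA
      simpa [hA, ← hs] using pf.orient e hA
    · have hne : e ∉ A.edges := Finset.disjoint_right.mp hc.edge_disj hB
      obtain ⟨_, _, hs⟩ := hc.sub2.2.2 e hB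
      simpa [hne, ← hs] using qf.orient e hB
  · intro e he
    rw [← hc.edge_union] at he
    rcases Finset.mem_union.mp he with hA | hB
    · simpa [hA] using pf.nonzero e hA
    · have hne : e ∉ A.edges := Finset.disjoint_right.mp hc.edge_disj hB
      simpa [hne] using qf.nonzero e hB
  · intro e he
    rw [← hc.edge_union] at he
    rcases Finset.mem_union.mp he with hA | hB
    · simpa [hA] using pf.bounded e hA
    · have hne : e ∉ A.edges := Finset.disjoint_right.mp hc.edge_disj hB
      simpa [hne] using qf.bounded e hB
  · intro v hv hvs hvt
    rw [SignedGraph.excess_union hc.sub1 hc.sub2 hc.edge_union hc.edge_disj]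
    rw [← hc.vert_union] at hv
    by_cases hvA : v ∈ A.verts <;> by_cases hvB : v ∈ B.verts
    · have : v ∈ A.verts ∩ B.verts := Finset.mem_inter.mpr ⟨hvA, hvB⟩
      rw [hc.vert_inter, Finset.mem_singleton] at this
      subst this
      rw [pf.in_t, hc.mid, qf.out_s]; ring
    · have hvs' : v ≠ A.s := by rw [← hc.src]; exact hvs
      have hvt' : v ≠ A.t := by
        intro h
        apply hvB
        have : A.t ∈ A.verts ∩ B.verts := by rw [hc.vert_inter]; exact Finset.mem_singleton_self _
        exact h ▸ (Finset.mem_inter.mp this).2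
      rw [pf.conserve v hvA hvs' hvt', B.excess_eq_zero _ _ _ hvB, add_zero]
    · have hvs' : v ≠ B.s := by
        intro h
        apply hvA
        have : A.t ∈ A.verts ∩ B.verts := by rw [hc.vert_inter]; exact Finset.mem_singleton_self _
        rw [h, ← hc.mid]
        exact (Finset.mem_inter.mp this).1
      have hvt' : v ≠ B.t := by rw [← hc.tgt]; exact hvt
      rw [qf.conserve v hvB hvs' hvt', A.excess_eq_zero _ _ _ hvA, zero_add]
    · exact absurd (Finset.mem_union.mp hv) (by tauto)
  · rw [SignedGraph.excess_union hc.sub1 hc.sub2 hc.edge_union hc.edge_disj]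
    have hGs : G.s ∉ B.verts := by
      intro h
      have : G.s ∈ A.verts ∩ B.verts := by
        refine Finset.mem_inter.mpr ⟨?_, h⟩
        rw [hc.src]; exact A.s_mem
      rw [hc.vert_inter, Finset.mem_singleton] at this
      exact A.s_ne_t (by rw [← hc.src, this])
    rw [B.excess_eq_zero _ _ _ hGs, add_zero, hc.src, pf.out_s]
  · rw [SignedGraph.excess_union hc.sub1 hc.sub2 hc.edge_union hc.edge_disj]
    have hGt : G.t ∉ A.verts := by
      intro h
      have : G.t ∈ A.verts ∩ B.verts := by
        refine Finset.mem_inter.mpr ⟨h, ?_⟩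
        rw [hc.tgt]; exact B.t_mem
      rw [hc.vert_inter, Finset.mem_singleton] at this
      have : B.s = B.t := by rw [← hc.mid, ← this, hc.tgt]
      exact B.s_ne_t this
    rw [A.excess_eq_zero _ _ _ hGt, zero_add, hc.tgt, qf.in_t]

/-- Gluing pseudoflows along a parallel connection. -/
lemma parallel_glue {G A B : TTGraph} (hc : IsParallelConn2 G A B) {x₁ y₁ x₂ y₂ : ℤ}
    (h1 : HasPseudoflow A x₁ y₁) (h2 : HasPseudoflow B x₂ y₂) :
    HasPseudoflow G (x₁ + x₂) (y₁ + y₂) := by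
  obtain ⟨o₁, o₂, φ, pf⟩ := h1
  obtain ⟨p₁, p₂, ψ, qf⟩ := h2
  refine ⟨fun e => if e ∈ A.edges then o₁ e else p₁ e,
    fun e => if e ∈ A.edges then o₂ e else p₂ e,
    fun e => if e ∈ A.edges then φ e else ψ e, ?_, ?_, ?_, ?_, ?_, ?_⟩
  · intro e he
    rw [← hc.edge_union] at he
    rcases Finset.mem_union.mp he with hA | hB
    · obtain ⟨_, _, hs⟩ := hc.sub1.2.2 e hA
      simpa [hA, ← hs] using pf.orient e hA
    · have hne : e ∉ A.edges := Finset.disjoint_right.mp hc.edge_disj hB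
      obtain ⟨_, _, hs⟩ := hc.sub2.2.2 e hB
      simpa [hne, ← hs] using qf.orient e hB
  · intro e he
    rw [← hc.edge_union] at he
    rcases Finset.mem_union.mp he with hA | hB
    · simpa [hA] using pf.nonzero e hA
    · have hne : e ∉ A.edges := Finset.disjoint_right.mp hc.edge_disj hB
      simpa [hne] using qf.nonzero e hB
  · intro e he
    rw [← hc.edge_union] at he
    rcases Finset.mem_union.mp he with hA | hB
    · simpa [hA] using pf.bounded e hA
    · have hne : e ∉ A.edges := Finset.disjoint_right.mp hc.edge_disj hB
      simpa [hne] using qf.bounded e hB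
  · intro v hv hvs hvt
    rw [SignedGraph.excess_union hc.sub1 hc.sub2 hc.edge_union hc.edge_disj]
    rw [← hc.vert_union] at hv
    by_cases hvA : v ∈ A.verts <;> by_cases hvB : v ∈ B.verts
    · have : v ∈ A.verts ∩ B.verts := Finset.mem_inter.mpr ⟨hvA, hvB⟩
      rw [hc.vert_inter, Finset.mem_insert, Finset.mem_singleton] at this
      rcases this with h | h
      · exact absurd (h.trans hc.src.symm) hvs
      · exact absurd (h.trans hc.tgt.symm) hvt
    · have hvs' : v ≠ A.s := fun h => hvs (h.trans hc.src.symm)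
      have hvt' : v ≠ A.t := fun h => hvt (h.trans hc.tgt.symm)
      rw [pf.conserve v hvA hvs' hvt', B.excess_eq_zero _ _ _ hvB, add_zero]
    · have hvs' : v ≠ B.s := fun h => hvs (h.trans (hc.src_eq.symm.trans hc.src.symm))
      have hvt' : v ≠ B.t := fun h => hvt (h.trans (hc.tgt_eq.symm.trans hc.tgt.symm))
      rw [qf.conserve v hvB hvs' hvt', A.excess_eq_zero _ _ _ hvA, zero_add]
    · exact absurd (Finset.mem_union.mp hv) (by tauto)
  · rw [SignedGraph.excess_union hc.sub1 hc.sub2 hc.edge_union hc.edge_disj]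
    have h1 : G.s = A.s := hc.src
    have h2 : G.s = B.s := hc.src.trans hc.src_eq
    rw [h1, pf.out_s, ← h1, h2, qf.out_s]; ring
  · rw [SignedGraph.excess_union hc.sub1 hc.sub2 hc.edge_union hc.edge_disj]
    have h1 : G.t = A.t := hc.tgt
    have h2 : G.t = B.t := hc.tgt.trans hc.tgt_eq
    rw [h1, pf.in_t, ← h1, h2, qf.in_t]

/-- Parallel connections are symmetric. -/
lemma parallel_symm {G A B : TTGraph} (hc : IsParallelConn2 G A B) :
    IsParallelConn2 G B A where
  sub1 := hc.sub2
  sub2 := hc.sub1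
  vert_union := by rw [Finset.union_comm]; exact hc.vert_union
  vert_inter := by rw [Finset.inter_comm, hc.vert_inter, hc.src_eq, hc.tgt_eq]
  src_eq := hc.src_eq.symm
  tgt_eq := hc.tgt_eq.symm
  edge_union := by rw [Finset.union_comm]; exact hc.edge_union
  edge_disj := hc.edge_disj.symm
  src := hc.src.trans hc.src_eq
  tgt := hc.tgt.trans hc.tgt_eq

end NecklaceAux
section PieceFlows

/-- Pseudoflow on a positive `K₂`. -/
lemma k2_flow {P : TTGraph} (h : IsPositiveK2 P) {x : ℤ}
    (h1 : -5 ≤ x) (h2 : x ≤ 5) (h0 : x ≠ 0) : HasPseudoflow P x x := by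
  obtain ⟨⟨hv, e, hE, hj⟩, hsgn⟩ := h
  have hst : P.s ≠ P.t := P.s_ne_t
  have hts : P.t ≠ P.s := Ne.symm P.s_ne_t
  refine ⟨fun g => if P.fst g = P.t then true else false,
    fun g => if P.snd g = P.t then true else false,
    fun _ => x, ?_, fun _ _ => h0, fun _ _ => by rw [abs_lt]; omega, ?_, ?_, ?_⟩
  · intro g hg
    have hge : g = e := by rwa [hE, Finset.mem_singleton] at hg
    subst hge
    constructor
    · intro _
      rcases hj with ⟨j1, j2⟩ | ⟨j1, j2⟩ <;> simp [j1, j2, hst, hts]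
    · intro hf
      exact absurd (hsgn g hg) (by simp [hf])
  · intro v hv' hvs hvt
    rw [hv, Finset.mem_insert, Finset.mem_singleton] at hv'
    tauto
  · unfold SignedGraph.excess
    rw [hE, Finset.sum_singleton]
    rcases hj with ⟨j1, j2⟩ | ⟨j1, j2⟩ <;>
      simp [j1, j2, hst, hts, dirVal]
  · unfold SignedGraph.excess
    rw [hE, Finset.sum_singleton]
    rcases hj with ⟨j1, j2⟩ | ⟨j1, j2⟩ <;>
      simp [j1, j2, hst, hts, dirVal]

/-- Pseudoflow on an unbalanced 2-cycle. -/
lemma d_flow {P : TTGraph} (h : IsUnbalanced2Cycle P) {x y : ℤ}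
    (hx1 : -5 ≤ x) (hx2 : x ≤ 5) (hy1 : -5 ≤ y) (hy2 : y ≤ 5)
    (hpar : x % 2 = y % 2) (hne : x ≠ y) (hne' : x ≠ -y) : HasPseudoflow P x y := by
  obtain ⟨hv, e, f, hef, hE, hje, hjf, hsg⟩ := h
  obtain ⟨p, hp⟩ : ∃ p, x + y = 2 * p := ⟨(x + y) / 2, by omega⟩
  obtain ⟨n, hn⟩ : ∃ n, x - y = 2 * n := ⟨(x - y) / 2, by omega⟩
  have hst : P.s ≠ P.t := P.s_ne_t
  have hts : P.t ≠ P.s := Ne.symm P.s_ne_t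
  have hmem : ∀ g ∈ P.edges, g = e ∨ g = f := by
    intro g hg
    rwa [hE, Finset.mem_insert, Finset.mem_singleton] at hg
  refine ⟨fun g => if P.sign g = true then (if P.fst g = P.t then true else false) else false,
    fun g => if P.sign g = true then (if P.snd g = P.t then true else false) else false,
    fun g => if P.sign g = true then p else n, ?_, ?_, ?_, ?_, ?_, ?_⟩
  · intro g hg
    constructor
    · intro hs
      rcases hmem g hg with rfl | rfl
      · rcases hje with ⟨j1, j2⟩ | ⟨j1, j2⟩ <;> simp [hs, j1, j2, hst, hts]
      · rcases hjf with ⟨j1, j2⟩ | ⟨j1, j2⟩ <;> simp [hs, j1, j2, hst, hts]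
    · intro hs
      simp [hs]
  · intro g hg
    by_cases hs : P.sign g = true <;> simp [hs] <;> omega
  · intro g hg
    by_cases hs : P.sign g = true <;> simp [hs] <;> rw [abs_lt] <;> omega
  · intro v hv' hvs hvt
    rw [hv, Finset.mem_insert, Finset.mem_singleton] at hv'
    tauto
  · unfold SignedGraph.excess
    rw [hE, Finset.sum_pair hef]
    cases hse : P.sign e
    · have hsf : P.sign f = true := by
        cases hsf : P.sign f
        · exact absurd (hse.trans hsf.symm) hsg
        · rfl
      rcases hje with ⟨j1, j2⟩ | ⟨j1, j2⟩ <;> rcases hjf with ⟨k1, k2⟩ | ⟨k1, k2⟩ <;>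
        simp [hse, hsf, j1, j2, k1, k2, hst, hts, dirVal] <;> omega
    · have hsf : P.sign f = false := by
        cases hsf : P.sign f
        · rfl
        · exact absurd (hse.trans hsf.symm) hsg
      rcases hje with ⟨j1, j2⟩ | ⟨j1, j2⟩ <;> rcases hjf with ⟨k1, k2⟩ | ⟨k1, k2⟩ <;>
        simp [hse, hsf, j1, j2, k1, k2, hst, hts, dirVal] <;> omega
  · unfold SignedGraph.excess
    rw [hE, Finset.sum_pair hef]
    cases hse : P.sign e
    · have hsf : P.sign f = true := by
        cases hsf : P.sign f
        · exact absurd (hse.trans hsf.symm) hsg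
        · rfl
      rcases hje with ⟨j1, j2⟩ | ⟨j1, j2⟩ <;> rcases hjf with ⟨k1, k2⟩ | ⟨k1, k2⟩ <;>
        simp [hse, hsf, j1, j2, k1, k2, hst, hts, dirVal] <;> omega
    · have hsf : P.sign f = false := by
        cases hsf : P.sign f
        · rfl
        · exact absurd (hse.trans hsf.symm) hsg
      rcases hje with ⟨j1, j2⟩ | ⟨j1, j2⟩ <;> rcases hjf with ⟨k1, k2⟩ | ⟨k1, k2⟩ <;>
        simp [hse, hsf, j1, j2, k1, k2, hst, hts, dirVal] <;> omega

end PieceFlows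
section ChainMachinery

/-- A piece of a string: positive `K₂` or unbalanced 2-cycle. -/
def IsPiece2 (P : TTGraph) : Prop := IsPositiveK2 P ∨ IsUnbalanced2Cycle P

open Classical in
/-- Number of unbalanced 2-cycles in a list of pieces. -/
noncomputable def dCount : List TTGraph → ℕ
  | [] => 0
  | P :: l => (if IsUnbalanced2Cycle P then 1 else 0) + dCount l

lemma k2_not_d {P : TTGraph} (h1 : IsPositiveK2 P) (h2 : IsUnbalanced2Cycle P) : False := by
  obtain ⟨⟨_, e, hE, _⟩, _⟩ := h1
  obtain ⟨_, e', f', hef, hE', _, _, _⟩ := h2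
  have h1' : e' ∈ P.edges := by rw [hE']; exact Finset.mem_insert_self _ _
  have h2' : f' ∈ P.edges := by
    rw [hE']; exact Finset.mem_insert_of_mem (Finset.mem_singleton_self _)
  rw [hE, Finset.mem_singleton] at h1' h2'
  exact hef (h1'.trans h2'.symm)

/-- Admissible in/out values for a single piece. -/
def SpecP (P : TTGraph) (x y : ℤ) : Prop :=
  (IsPositiveK2 P ∧ x = y ∧ x ≠ 0 ∧ -5 ≤ x ∧ x ≤ 5) ∨
  (IsUnbalanced2Cycle P ∧ -5 ≤ x ∧ x ≤ 5 ∧ -5 ≤ y ∧ y ≤ 5 ∧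
    x % 2 = y % 2 ∧ x ≠ y ∧ x ≠ -y)

lemma specP_flow {P : TTGraph} {x y : ℤ} (h : SpecP P x y) : HasPseudoflow P x y := by
  rcases h with ⟨hp, rfl, h0, hb1, hb2⟩ | ⟨hp, hx1, hx2, hy1, hy2, hpar, hne, hne'⟩
  · exact k2_flow hp hb1 hb2 h0
  · exact d_flow hp hx1 hx2 hy1 hy2 hpar hne hne'

/-- Admissible in/out values for a chain of pieces. -/
def Spec (l : List TTGraph) (x y : ℤ) : Prop :=
  -5 ≤ x ∧ x ≤ 5 ∧ -5 ≤ y ∧ y ≤ 5 ∧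
  ((dCount l = 0 ∧ x = y ∧ x ≠ 0) ∨
   (1 ≤ dCount l ∧ x % 2 = 1 ∧ y % 2 = 1 ∧ (dCount l = 1 → x ≠ y ∧ x ≠ -y)) ∨
   (1 ≤ dCount l ∧ (x = 2 ∨ x = -2 ∨ x = 4 ∨ x = -4) ∧
     (y = 2 ∨ y = -2 ∨ y = 4 ∨ y = -4) ∧ ((x = y ∨ x = -y) ↔ Even (dCount l))))

lemma zchoice : ∀ x ∈ I5, ∀ y ∈ I5, x % 2 = 1 → y % 2 = 1 →
    ∃ z ∈ I5, z % 2 = 1 ∧ z ≠ x ∧ z ≠ -x ∧ z ≠ y ∧ z ≠ -y := by decide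

lemma spec_step {P : TTGraph} {l : List TTGraph} (hP : IsPiece2 P) {x y : ℤ}
    (h : Spec (P :: l) x y) : ∃ z, SpecP P x z ∧ Spec l z y := by
  obtain ⟨hx1, hx2, hy1, hy2, hd⟩ := h
  by_cases hD : IsUnbalanced2Cycle P
  · have hdc : dCount (P :: l) = 1 + dCount l := by simp [dCount, hD]
    rcases hd with ⟨h0, _, _⟩ | ⟨_, hxo, hyo, him⟩ | ⟨_, hx4, hy4, hiff⟩
    · omega
    · rcases Nat.eq_zero_or_pos (dCount l) with hdl | hdl
      · obtain ⟨hne, hne'⟩ := him (by omega)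
        refine ⟨y, Or.inr ⟨hD, hx1, hx2, hy1, hy2, by omega, hne, hne'⟩,
          hy1, hy2, hy1, hy2, Or.inl ⟨hdl, rfl, by omega⟩⟩
      · obtain ⟨z, hzI, hzo, hz1, hz2, hz3, hz4⟩ :=
          zchoice x (by simp [I5, Finset.mem_Icc]; omega) y
            (by simp [I5, Finset.mem_Icc]; omega) hxo hyo
        simp only [I5, Finset.mem_Icc] at hzI
        refine ⟨z, Or.inr ⟨hD, hx1, hx2, hzI.1, hzI.2, by omega,
          fun hh => hz1 hh.symm, fun hh => hz2 (by omega)⟩,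
          hzI.1, hzI.2, hy1, hy2, Or.inr (Or.inl ⟨hdl, hzo, hyo,
            fun _ => ⟨hz3, fun hh => hz4 (by omega)⟩⟩)⟩
    · rcases Nat.eq_zero_or_pos (dCount l) with hdl | hdl
      · have hodd : ¬ Even (dCount (P :: l)) := by
          rw [hdc, hdl]; decide
        have hne : ¬ (x = y ∨ x = -y) := fun hh => hodd (hiff.mp hh)
        push_neg at hne
        refine ⟨y, Or.inr ⟨hD, hx1, hx2, hy1, hy2, by omega, hne.1, hne.2⟩,
          hy1, hy2, hy1, hy2, Or.inl ⟨hdl, rfl, by omega⟩⟩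
      · -- choose z in the other even class
        have hiff' : (x = y ∨ x = -y) ↔ ¬ Even (dCount l) := by
          rw [hiff, hdc]
          rw [Nat.even_add]
          simp [Nat.odd_iff, Nat.even_iff]
        rcases hx4 with rfl | rfl | rfl | rfl
        · refine ⟨4, Or.inr ⟨hD, by omega, by omega, by omega, by omega, by omega,
            by omega, by omega⟩, by omega, by omega, hy1, hy2,
            Or.inr (Or.inr ⟨hdl, by omega, hy4, ?_⟩)⟩
          constructor
          · intro hz
            by_contra hev
            have := hiff'.mpr hev
            rcases hy4 with rfl | rfl | rfl | rfl <;> omega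
          · intro hev
            have : ¬ (2 = y ∨ 2 = -y) := fun hh => (hiff'.mp hh) hev
            rcases hy4 with rfl | rfl | rfl | rfl <;> omega
        · refine ⟨4, Or.inr ⟨hD, by omega, by omega, by omega, by omega, by omega,
            by omega, by omega⟩, by omega, by omega, hy1, hy2,
            Or.inr (Or.inr ⟨hdl, by omega, hy4, ?_⟩)⟩
          constructor
          · intro hz
            by_contra hev
            have := hiff'.mpr hev
            rcases hy4 with rfl | rfl | rfl | rfl <;> omega
          · intro hev
            have : ¬ (-2 = y ∨ -2 = -y) := fun hh => (hiff'.mp hh) hev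
            rcases hy4 with rfl | rfl | rfl | rfl <;> omega
        · refine ⟨2, Or.inr ⟨hD, by omega, by omega, by omega, by omega, by omega,
            by omega, by omega⟩, by omega, by omega, hy1, hy2,
            Or.inr (Or.inr ⟨hdl, by omega, hy4, ?_⟩)⟩
          constructor
          · intro hz
            by_contra hev
            have := hiff'.mpr hev
            rcases hy4 with rfl | rfl | rfl | rfl <;> omega
          · intro hev
            have : ¬ (4 = y ∨ 4 = -y) := fun hh => (hiff'.mp hh) hev
            rcases hy4 with rfl | rfl | rfl | rfl <;> omega
        · refine ⟨2, Or.inr ⟨hD, by omega, by omega, by omega, by omega, by omega,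
            by omega, by omega⟩, by omega, by omega, hy1, hy2,
            Or.inr (Or.inr ⟨hdl, by omega, hy4, ?_⟩)⟩
          constructor
          · intro hz
            by_contra hev
            have := hiff'.mpr hev
            rcases hy4 with rfl | rfl | rfl | rfl <;> omega
          · intro hev
            have : ¬ (-4 = y ∨ -4 = -y) := fun hh => (hiff'.mp hh) hev
            rcases hy4 with rfl | rfl | rfl | rfl <;> omega
  · have hK : IsPositiveK2 P := by
      rcases hP with h | h
      · exact h
      · exact absurd h hD
    have hdc : dCount (P :: l) = dCount l := by simp [dCount, hD]
    have h0 : x ≠ 0 := by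
      rcases hd with ⟨_, _, h0⟩ | ⟨_, hxo, _, _⟩ | ⟨_, hx4, _, _⟩
      · exact h0
      · omega
      · rcases hx4 with rfl | rfl | rfl | rfl <;> omega
    exact ⟨x, Or.inl ⟨hK, rfl, h0, hx1, hx2⟩,
      hx1, hx2, hy1, hy2, by rw [← hdc]; exact hd⟩

lemma spec_single {P : TTGraph} (hP : IsPiece2 P) {x y : ℤ} (h : Spec [P] x y) :
    SpecP P x y := by
  obtain ⟨hx1, hx2, hy1, hy2, hd⟩ := h
  by_cases hD : IsUnbalanced2Cycle P
  · have hdc : dCount [P] = 1 := by simp [dCount, hD]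
    rcases hd with ⟨h0, _, _⟩ | ⟨_, hxo, hyo, him⟩ | ⟨_, hx4, hy4, hiff⟩
    · omega
    · obtain ⟨hne, hne'⟩ := him hdc
      exact Or.inr ⟨hD, hx1, hx2, hy1, hy2, by omega, hne, hne'⟩
    · have : ¬ (x = y ∨ x = -y) := by
        rw [hiff, hdc]; decide
      push_neg at this
      refine Or.inr ⟨hD, hx1, hx2, hy1, hy2, ?_, this.1, this.2⟩
      rcases hx4 with rfl | rfl | rfl | rfl <;> rcases hy4 with rfl | rfl | rfl | rfl <;> rfl
  · have hK : IsPositiveK2 P := by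
      rcases hP with h | h
      · exact h
      · exact absurd h hD
    have hdc : dCount [P] = 0 := by simp [dCount, hD]
    rcases hd with ⟨_, rfl, h0⟩ | ⟨h1, _, _, _⟩ | ⟨h1, _, _, _⟩
    · exact Or.inl ⟨hK, rfl, h0, hx1, hx2⟩
    · omega
    · omega

lemma chain_flow {H : TTGraph} {l : List TTGraph} (hconn : IsSeriesConnList H l)
    (hp : ∀ P ∈ l, IsPiece2 P) :
    ∀ x y : ℤ, Spec l x y → HasPseudoflow H x y := by
  induction hconn with
  | @two G H₁ H₂ hc =>
    intro x y hs
    obtain ⟨z, h1, h2⟩ := spec_step (hp H₁ (by simp)) hs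
    exact series_glue hc (specP_flow h1)
      (specP_flow (spec_single (hp H₂ (by simp)) h2))
  | @cons G G' Hd ll hc htail ih =>
    intro x y hs
    obtain ⟨z, h1, h2⟩ := spec_step (hp Hd (by simp)) hs
    exact series_glue hc (specP_flow h1)
      (ih (fun P hP => hp P (List.mem_cons_of_mem _ hP)) z y h2)

end ChainMachinery
section StructuralLemmas

lemma seriesConnList_split {H : TTGraph} {l : List TTGraph}
    (h : IsSeriesConnList H l) : ∃ A B : TTGraph, IsSeriesConn2 H A B := by
  cases h with
  | two hc => exact ⟨_, _, hc⟩
  | cons hc _ => exact ⟨_, _, hc⟩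

/-- In a series connection no edge joins the two terminals. -/
lemma no_st_edge {H : TTGraph} {l : List TTGraph} (h : IsSeriesConnList H l) :
    ∀ e ∈ H.edges, ¬ H.toSignedGraph.Joins e H.s H.t := by
  obtain ⟨A, B, hc⟩ := seriesConnList_split h
  intro e he hj
  rw [← hc.edge_union] at he
  rcases Finset.mem_union.mp he with heA | heB
  · obtain ⟨h1, h2, _⟩ := hc.sub1.2.2 e heA
    have htA : H.t ∈ A.verts := by
      rcases hj with ⟨u1, u2⟩ | ⟨u1, u2⟩
      · exact u2 ▸ (h2 ▸ A.snd_mem e heA)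
      · exact u1 ▸ (h1 ▸ A.fst_mem e heA)
    have htB : H.t ∈ B.verts := hc.tgt ▸ B.t_mem
    have hmem : H.t ∈ A.verts ∩ B.verts := Finset.mem_inter.mpr ⟨htA, htB⟩
    rw [hc.vert_inter, Finset.mem_singleton] at hmem
    exact B.s_ne_t (by rw [← hc.mid, ← hmem, hc.tgt])
  · obtain ⟨h1, h2, _⟩ := hc.sub2.2.2 e heB
    have hsB : H.s ∈ B.verts := by
      rcases hj with ⟨u1, u2⟩ | ⟨u1, u2⟩
      · exact u1 ▸ (h1 ▸ B.fst_mem e heB)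
      · exact u2 ▸ (h2 ▸ B.snd_mem e heB)
    have hsA : H.s ∈ A.verts := hc.src ▸ A.s_mem
    have hmem : H.s ∈ A.verts ∩ B.verts := Finset.mem_inter.mpr ⟨hsA, hsB⟩
    rw [hc.vert_inter, Finset.mem_singleton] at hmem
    exact A.s_ne_t (by rw [← hmem, hc.src])

lemma piece_par {P : TTGraph} (hP : IsPiece2 P) {e f : ℕ}
    (he : e ∈ P.edges) (hf : f ∈ P.edges) (hef : e ≠ f) : IsUnbalanced2Cycle P := by
  rcases hP with ⟨⟨_, e₀, hE, _⟩, _⟩ | h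
  · rw [hE, Finset.mem_singleton] at he hf
    exact absurd (he.trans hf.symm) hef
  · exact h

/-- Parallel edges cannot be split between the two sides of a series connection. -/
lemma mixed_par {H A B : TTGraph} (hc : IsSeriesConn2 H A B) {e f : ℕ}
    (heA : e ∈ A.edges) (hfB : f ∈ B.edges)
    (hne : H.toSignedGraph.fst e ≠ H.toSignedGraph.snd e)
    (hpar : (H.toSignedGraph.fst e = H.toSignedGraph.fst f ∧
             H.toSignedGraph.snd e = H.toSignedGraph.snd f) ∨
            (H.toSignedGraph.fst e = H.toSignedGraph.snd f ∧
             H.toSignedGraph.snd e = H.toSignedGraph.fst f)) : False := by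
  obtain ⟨a1, a2, _⟩ := hc.sub1.2.2 e heA
  obtain ⟨b1, b2, _⟩ := hc.sub2.2.2 f hfB
  have hfst : H.toSignedGraph.fst e ∈ A.verts := a1 ▸ A.fst_mem e heA
  have hsnd : H.toSignedGraph.snd e ∈ A.verts := a2 ▸ A.snd_mem e heA
  have hfstB : H.toSignedGraph.fst e ∈ B.verts := by
    rcases hpar with ⟨p1, _⟩ | ⟨p1, _⟩
    · exact p1 ▸ (b1 ▸ B.fst_mem f hfB)
    · exact p1 ▸ (b2 ▸ B.snd_mem f hfB)
  have hsndB : H.toSignedGraph.snd e ∈ B.verts := by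
    rcases hpar with ⟨_, p2⟩ | ⟨_, p2⟩
    · exact p2 ▸ (b2 ▸ B.snd_mem f hfB)
    · exact p2 ▸ (b1 ▸ B.fst_mem f hfB)
  have h1 : H.toSignedGraph.fst e ∈ A.verts ∩ B.verts := Finset.mem_inter.mpr ⟨hfst, hfstB⟩
  have h2 : H.toSignedGraph.snd e ∈ A.verts ∩ B.verts := Finset.mem_inter.mpr ⟨hsnd, hsndB⟩
  rw [hc.vert_inter, Finset.mem_singleton] at h1 h2
  exact hne (h1.trans h2.symm)

/-- A pair of parallel edges in a chain of pieces lies inside an unbalanced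
2-cycle piece. -/
lemma chain_par {H : TTGraph} {l : List TTGraph} (hconn : IsSeriesConnList H l)
    (hp : ∀ P ∈ l, IsPiece2 P) :
    ∀ e f : ℕ, e ∈ H.edges → f ∈ H.edges → e ≠ f →
      H.toSignedGraph.fst e ≠ H.toSignedGraph.snd e →
      ((H.toSignedGraph.fst e = H.toSignedGraph.fst f ∧
        H.toSignedGraph.snd e = H.toSignedGraph.snd f) ∨
       (H.toSignedGraph.fst e = H.toSignedGraph.snd f ∧
        H.toSignedGraph.snd e = H.toSignedGraph.fst f)) →
      ∃ P ∈ l, IsUnbalanced2Cycle P ∧ e ∈ P.edges ∧ f ∈ P.edges := by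
  induction hconn with
  | @two G H₁ H₂ hc =>
    intro e f he hf hef hne hpar
    rw [← hc.edge_union] at he hf
    rcases Finset.mem_union.mp he with heA | heB <;>
      rcases Finset.mem_union.mp hf with hfA | hfB
    · exact ⟨H₁, by simp, piece_par (hp H₁ (by simp)) heA hfA hef, heA, hfA⟩
    · exact absurd (mixed_par hc heA hfB hne hpar) not_false
    · have hpar' := hpar
      have : False := by
        apply mixed_par hc hfA heB
        · intro hh
          rcases hpar with ⟨p1, p2⟩ | ⟨p1, p2⟩
          · exact hne (by rw [p1, p2, hh])
          · exact hne (by rw [p1, p2, hh])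
        · rcases hpar with ⟨p1, p2⟩ | ⟨p1, p2⟩
          · exact Or.inl ⟨p1.symm, p2.symm⟩
          · exact Or.inr ⟨p2.symm, p1.symm⟩
      exact absurd this not_false
    · exact ⟨H₂, by simp, piece_par (hp H₂ (by simp)) heB hfB hef, heB, hfB⟩
  | @cons G G' Hd ll hc htail ih =>
    intro e f he hf hef hne hpar
    rw [← hc.edge_union] at he hf
    rcases Finset.mem_union.mp he with heA | heB <;>
      rcases Finset.mem_union.mp hf with hfA | hfB
    · exact ⟨Hd, by simp, piece_par (hp Hd (by simp)) heA hfA hef, heA, hfA⟩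
    · exact absurd (mixed_par hc heA hfB hne hpar) not_false
    · have : False := by
        apply mixed_par hc hfA heB
        · intro hh
          rcases hpar with ⟨p1, p2⟩ | ⟨p1, p2⟩
          · exact hne (by rw [p1, p2, hh])
          · exact hne (by rw [p1, p2, hh])
        · rcases hpar with ⟨p1, p2⟩ | ⟨p1, p2⟩
          · exact Or.inl ⟨p1.symm, p2.symm⟩
          · exact Or.inr ⟨p2.symm, p1.symm⟩
      exact absurd this not_false
    · obtain ⟨e1, e2, _⟩ := hc.sub2.2.2 e heB
      obtain ⟨f1, f2, _⟩ := hc.sub2.2.2 f hfB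
      obtain ⟨P, hPl, hPD, hPe, hPf⟩ :=
        ih (fun P hP => hp P (List.mem_cons_of_mem _ hP)) e f heB hfB hef
          (by rw [e1, e2]; exact hne)
          (by rw [e1, e2, f1, f2]; exact hpar)
      exact ⟨P, List.mem_cons_of_mem _ hPl, hPD, hPe, hPf⟩

lemma dCount_pos_of_mem {P : TTGraph} {l : List TTGraph} (hP : P ∈ l)
    (hD : IsUnbalanced2Cycle P) : 1 ≤ dCount l := by
  induction l with
  | nil => simp at hP
  | cons Q t ih =>
    rcases List.mem_cons.mp hP with rfl | hP'
    · simp [dCount, hD]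
    · have := ih hP'
      simp only [dCount]
      omega

lemma dCount_two {P Q : TTGraph} {l : List TTGraph} (hP : P ∈ l) (hQ : Q ∈ l)
    (hPQ : P ≠ Q) (hDP : IsUnbalanced2Cycle P) (hDQ : IsUnbalanced2Cycle Q) :
    2 ≤ dCount l := by
  induction l with
  | nil => simp at hP
  | cons R t ih =>
    rcases List.mem_cons.mp hP with rfl | hP'
    · have hQ' : Q ∈ t := by
        rcases List.mem_cons.mp hQ with rfl | h
        · exact absurd rfl hPQ
        · exact h
      have := dCount_pos_of_mem hQ' hDQ
      simp only [dCount, if_pos hDP]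
      omega
    · rcases List.mem_cons.mp hQ with rfl | hQ'
      · have := dCount_pos_of_mem hP' hDP
        simp only [dCount, if_pos hDQ]
        omega
      · have := ih hP' hQ'
        simp only [dCount]
        omega

end StructuralLemmas
section StringLemmas

/-- A nontrivial string decomposes into a chain of pieces containing an
unbalanced 2-cycle. -/
lemma string_nontrivial {H : TTGraph} (hs : IsString H) (hcard : 2 < H.verts.card) :
    ∃ l, IsSeriesConnList H l ∧ (∀ P ∈ l, IsPiece2 P) ∧
      ∃ P ∈ l, IsUnbalanced2Cycle P := by
  have hle : ({H.s, H.t} : Finset ℕ).card ≤ 2 := by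
    apply le_trans (Finset.card_insert_le _ _)
    simp
  rcases hs.1 with hk | hd | ⟨l, hl, hp⟩
  · rw [hk.1.1] at hcard; omega
  · rw [hd.1] at hcard; omega
  · refine ⟨l, hl, hp, ?_⟩
    have hex : ∃ v ∈ H.verts, v ≠ H.s ∧ v ≠ H.t := by
      by_contra hno
      push_neg at hno
      have hsub : H.verts ⊆ {H.s, H.t} := by
        intro v hv
        rcases eq_or_ne v H.s with rfl | hvs
        · exact Finset.mem_insert_self _ _
        · rw [hno v hv hvs]
          exact Finset.mem_insert_of_mem (Finset.mem_singleton_self _)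
      have := Finset.card_le_card hsub
      omega
    obtain ⟨v, hv, hvs, hvt⟩ := hex
    obtain ⟨e, he, f, hf, ⟨hef, hpar⟩, hne, _⟩ := hs.2 v hv hvs hvt
    obtain ⟨P, hPl, hPD, _, _⟩ := chain_par hl hp e f he hf hef hne hpar
    exact ⟨P, hPl, hPD⟩

lemma choiceM1 : ∀ a ∈ I5, ∀ b ∈ I5, a % 2 = b % 2 → a ≠ b → a ≠ -b →
    ∃ e ∈ I5, e ≠ 0 ∧ a - e ∈ I5 ∧ b - e ∈ I5 ∧ (a - e) % 2 = 1 ∧ (b - e) % 2 = 1 ∧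
      (a - e) ≠ (b - e) ∧ (a - e) ≠ -(b - e) := by decide

lemma choiceM2 : ∀ a ∈ I5, ∀ b ∈ I5, a % 2 = 0 → b % 2 = 0 → a ≠ b → a ≠ -b →
    ∃ u ∈ I5, ∃ v ∈ I5, u % 2 = 1 ∧ v % 2 = 1 ∧ u ≠ v ∧ u ≠ -v ∧
      a - u ∈ I5 ∧ b - v ∈ I5 ∧ (a - u) % 2 = 1 ∧ (b - v) % 2 = 1 ∧
      (a - u) ≠ (b - v) ∧ (a - u) ≠ -(b - v) := by decide

lemma choiceM3 : ∀ a ∈ I5, ∀ b ∈ I5, a % 2 = 1 → b % 2 = 1 → a ≠ b → a ≠ -b →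
    ∃ u ∈ I5, ∃ v ∈ I5, (u = 2 ∨ u = -2 ∨ u = 4 ∨ u = -4) ∧
      (v = 2 ∨ v = -2 ∨ v = 4 ∨ v = -4) ∧ (u = v ∨ u = -v) ∧
      a - u ∈ I5 ∧ b - v ∈ I5 ∧ (a - u) % 2 = 1 ∧ (b - v) % 2 = 1 ∧
      (a - u) ≠ (b - v) ∧ (a - u) ≠ -(b - v) := by decide

lemma choiceM4 : ∀ a ∈ I5, ∀ b ∈ I5, a % 2 = 1 → b % 2 = 1 → a ≠ b → a ≠ -b →
    ∃ u ∈ I5, ∃ v ∈ I5, (u = 2 ∨ u = -2 ∨ u = 4 ∨ u = -4) ∧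
      (v = 2 ∨ v = -2 ∨ v = 4 ∨ v = -4) ∧ (u ≠ v ∧ u ≠ -v) ∧
      a - u ∈ I5 ∧ b - v ∈ I5 ∧ (a - u) % 2 = 1 ∧ (b - v) % 2 = 1 ∧
      (a - u) ≠ (b - v) ∧ (a - u) ≠ -(b - v) := by decide

end StringLemmas
section BetaArgument

/-- If `β(G) ≥ 2` and the second string has no pair of parallel edges, then
the chain of the first string contains at least two unbalanced 2-cycles. -/
lemma beta_arg {G H₁ H₂ : TTGraph} (hpc : IsParallelConn2 G H₁ H₂)
    {l₁ : List TTGraph} (hl₁ : IsSeriesConnList H₁ l₁) (hp₁ : ∀ P ∈ l₁, IsPiece2 P)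
    (hnopar₂ : ∀ e f : ℕ, e ∈ H₂.edges → f ∈ H₂.edges → e ≠ f →
      H₂.toSignedGraph.fst e ≠ H₂.toSignedGraph.snd e →
      ((H₂.toSignedGraph.fst e = H₂.toSignedGraph.fst f ∧
        H₂.toSignedGraph.snd e = H₂.toSignedGraph.snd f) ∨
       (H₂.toSignedGraph.fst e = H₂.toSignedGraph.snd f ∧
        H₂.toSignedGraph.snd e = H₂.toSignedGraph.fst f)) → False)
    (hβ : 2 ≤ G.toSignedGraph.beta) : 2 ≤ dCount l₁ := by
  have h2 : 1 < ((G.toSignedGraph.edges ×ˢ G.toSignedGraph.edges).filter fun p =>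
      p.1 < p.2 ∧ G.toSignedGraph.fst p.1 ≠ G.toSignedGraph.snd p.1 ∧
      ((G.toSignedGraph.fst p.1 = G.toSignedGraph.fst p.2 ∧
        G.toSignedGraph.snd p.1 = G.toSignedGraph.snd p.2) ∨
       (G.toSignedGraph.fst p.1 = G.toSignedGraph.snd p.2 ∧
        G.toSignedGraph.snd p.1 = G.toSignedGraph.fst p.2))).card := by
    unfold SignedGraph.beta at hβ
    omega
  obtain ⟨p, hp, q, hq, hpq⟩ := Finset.one_lt_card.mp h2
  have host : ∀ r : ℕ × ℕ,
      r ∈ ((G.toSignedGraph.edges ×ˢ G.toSignedGraph.edges).filter fun p =>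
        p.1 < p.2 ∧ G.toSignedGraph.fst p.1 ≠ G.toSignedGraph.snd p.1 ∧
        ((G.toSignedGraph.fst p.1 = G.toSignedGraph.fst p.2 ∧
          G.toSignedGraph.snd p.1 = G.toSignedGraph.snd p.2) ∨
         (G.toSignedGraph.fst p.1 = G.toSignedGraph.snd p.2 ∧
          G.toSignedGraph.snd p.1 = G.toSignedGraph.fst p.2))) →
      r.1 < r.2 ∧ ∃ P ∈ l₁, IsUnbalanced2Cycle P ∧ r.1 ∈ P.edges ∧ r.2 ∈ P.edges := by
    intro r hr
    obtain ⟨hrp, hlt, hne, hpar⟩ := Finset.mem_filter.mp hr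
    refine ⟨hlt, ?_⟩
    have hr1 : r.1 ∈ G.edges := (Finset.mem_product.mp hrp).1
    have hr2 : r.2 ∈ G.edges := (Finset.mem_product.mp hrp).2
    have hne12 : r.1 ≠ r.2 := ne_of_lt hlt
    rw [← hpc.edge_union] at hr1 hr2
    -- endpoints in the intersection give a terminal-joining edge of H₁
    have hIint : ∀ w : ℕ, w ∈ H₁.verts → w ∈ H₂.verts → w = H₁.s ∨ w = H₁.t := by
      intro w w1 w2
      have : w ∈ H₁.verts ∩ H₂.verts := Finset.mem_inter.mpr ⟨w1, w2⟩
      rw [hpc.vert_inter, Finset.mem_insert, Finset.mem_singleton] at this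
      exact this
    have hjoin : ∀ w : ℕ, w ∈ H₁.edges →
        G.toSignedGraph.fst w ∈ H₂.verts → G.toSignedGraph.snd w ∈ H₂.verts →
        G.toSignedGraph.fst w ≠ G.toSignedGraph.snd w → False := by
      intro w hw hf2 hs2 hfs
      obtain ⟨i1, i2, _⟩ := hpc.sub1.2.2 w hw
      have hf1 : G.toSignedGraph.fst w ∈ H₁.verts := i1 ▸ H₁.fst_mem w hw
      have hs1 : G.toSignedGraph.snd w ∈ H₁.verts := i2 ▸ H₁.snd_mem w hw
      have hfst := hIint _ hf1 hf2
      have hsnd := hIint _ hs1 hs2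
      apply no_st_edge hl₁ w hw
      unfold SignedGraph.Joins
      rcases hfst with h1 | h1 <;> rcases hsnd with h2 | h2
      · exact absurd (h1.trans h2.symm) hfs
      · exact Or.inl ⟨i1.trans h1, i2.trans h2⟩
      · exact Or.inr ⟨i1.trans h1, i2.trans h2⟩
      · exact absurd (h1.trans h2.symm) hfs
    rcases Finset.mem_union.mp hr1 with h1A | h1B <;>
      rcases Finset.mem_union.mp hr2 with h2A | h2B
    · -- both in H₁
      obtain ⟨i1, i2, _⟩ := hpc.sub1.2.2 r.1 h1A
      obtain ⟨j1, j2, _⟩ := hpc.sub1.2.2 r.2 h2A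
      exact chain_par hl₁ hp₁ r.1 r.2 h1A h2A hne12
        (by rw [i1, i2]; exact hne)
        (by rw [i1, i2, j1, j2]; exact hpar)
    · -- r.1 ∈ H₁, r.2 ∈ H₂ : impossible
      exfalso
      obtain ⟨j1, j2, _⟩ := hpc.sub2.2.2 r.2 h2B
      have hf2 : G.toSignedGraph.fst r.1 ∈ H₂.verts := by
        rcases hpar with ⟨p1, _⟩ | ⟨p1, _⟩
        · exact p1 ▸ (j1 ▸ H₂.fst_mem r.2 h2B)
        · exact p1 ▸ (j2 ▸ H₂.snd_mem r.2 h2B)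
      have hs2' : G.toSignedGraph.snd r.1 ∈ H₂.verts := by
        rcases hpar with ⟨_, p2⟩ | ⟨_, p2⟩
        · exact p2 ▸ (j2 ▸ H₂.snd_mem r.2 h2B)
        · exact p2 ▸ (j1 ▸ H₂.fst_mem r.2 h2B)
      exact hjoin r.1 h1A hf2 hs2' hne
    · -- r.1 ∈ H₂, r.2 ∈ H₁ : impossible
      exfalso
      obtain ⟨j1, j2, _⟩ := hpc.sub2.2.2 r.1 h1B
      have hne2 : G.toSignedGraph.fst r.2 ≠ G.toSignedGraph.snd r.2 := by
        rcases hpar with ⟨p1, p2⟩ | ⟨p1, p2⟩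
        · rw [← p1, ← p2]; exact hne
        · rw [← p1, ← p2]; exact fun hh => hne hh.symm
      have hf2 : G.toSignedGraph.fst r.2 ∈ H₂.verts := by
        rcases hpar with ⟨p1, _⟩ | ⟨_, p2⟩
        · rw [← p1, ← j1]; exact H₂.fst_mem r.1 h1B
        · rw [← p2, ← j2]; exact H₂.snd_mem r.1 h1B
      have hs2' : G.toSignedGraph.snd r.2 ∈ H₂.verts := by
        rcases hpar with ⟨_, p2⟩ | ⟨p1, _⟩
        · rw [← p2, ← j2]; exact H₂.snd_mem r.1 h1B
        · rw [← p1, ← j1]; exact H₂.fst_mem r.1 h1B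
      exact hjoin r.2 h2A hf2 hs2' hne2
    · -- both in H₂ : impossible
      exfalso
      obtain ⟨i1, i2, _⟩ := hpc.sub2.2.2 r.1 h1B
      obtain ⟨j1, j2, _⟩ := hpc.sub2.2.2 r.2 h2B
      exact hnopar₂ r.1 r.2 h1B h2B hne12
        (by rw [i1, i2]; exact hne)
        (by rw [i1, i2, j1, j2]; exact hpar)
  obtain ⟨hltp, P, hPl, hPD, hPe1, hPe2⟩ := host p hp
  obtain ⟨hltq, Q, hQl, hQD, hQe1, hQe2⟩ := host q hq
  have hPQ : P ≠ Q := by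
    rintro rfl
    obtain ⟨_, e, f, hef, hE, _, _, _⟩ := hPD
    rw [hE, Finset.mem_insert, Finset.mem_singleton] at hPe1 hPe2 hQe1 hQe2
    apply hpq
    have : p.1 = q.1 ∧ p.2 = q.2 := by
      rcases hPe1 with he1 | he1 <;> rcases hPe2 with he2 | he2 <;>
        rcases hQe1 with hf1 | hf1 <;> rcases hQe2 with hf2 | hf2 <;>
        (try exact ⟨he1.trans hf1.symm, he2.trans hf2.symm⟩) <;> omega
    exact Prod.ext this.1 this.2
  exact dCount_two hPl hQl hPQ hPD hQD

end BetaArgument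
section MainProof

lemma necklace_aux {G H₁ H₂ : TTGraph} (hpc : IsParallelConn2 G H₁ H₂)
    (hs1 : IsString H₁) (hs2 : IsString H₂) (hnt : 2 < H₁.verts.card)
    (a b : ℤ) (ha : a ∈ I5) (hb : b ∈ I5) (hpar : a % 2 = b % 2)
    (h : (a ≠ b ∧ a ≠ -b) ∨ (a = 0 ∧ b = 0 ∧ 2 ≤ G.toSignedGraph.beta)) :
    HasPseudoflow G a b := by
  obtain ⟨l₁, hl₁, hp₁, P₀, hP₀l, hP₀D⟩ := string_nontrivial hs1 hnt
  have hd₁ : 1 ≤ dCount l₁ := dCount_pos_of_mem hP₀l hP₀D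
  have haI : a ∈ I5 := ha
  have hbI : b ∈ I5 := hb
  simp only [I5, Finset.mem_Icc] at ha hb
  have cap1 : ∀ x y : ℤ, -5 ≤ x → x ≤ 5 → -5 ≤ y → y ≤ 5 → x % 2 = 1 → y % 2 = 1 →
      x ≠ y → x ≠ -y → HasPseudoflow H₁ x y := fun x y h1 h2 h3 h4 h5 h6 h7 h8 =>
    chain_flow hl₁ hp₁ x y
      ⟨h1, h2, h3, h4, Or.inr (Or.inl ⟨hd₁, h5, h6, fun _ => ⟨h7, h8⟩⟩)⟩
  rcases h with ⟨hab, hab'⟩ | ⟨rfl, rfl, hβ⟩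
  · -- case a ≠ b and a ≠ -b
    rcases hs2.1 with hk2 | hd2 | ⟨l₂, hl₂, hp₂⟩
    · -- H₂ is a positive K₂
      obtain ⟨e, heI, he0, haeI, hbeI, hao, hbo, hne, hne'⟩ :=
        choiceM1 a haI b hbI hpar hab hab'
      simp only [I5, Finset.mem_Icc] at heI haeI hbeI
      have h1 := cap1 (a - e) (b - e) haeI.1 haeI.2 hbeI.1 hbeI.2 hao hbo hne hne'
      have h2 := k2_flow hk2 heI.1 heI.2 he0
      have := parallel_glue hpc h1 h2
      rwa [show a - e + e = a by ring, show b - e + e = b by ring] at this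
    · -- H₂ is an unbalanced 2-cycle
      rcases Int.emod_two_eq a with hae | hao
      · obtain ⟨u, huI, v, hvI, huo, hvo, huv, huv', hauI, hbvI, hao', hbo', hne, hne'⟩ :=
          choiceM2 a haI b hbI hae (by omega) hab hab'
        simp only [I5, Finset.mem_Icc] at huI hvI hauI hbvI
        have h1 := cap1 (a - u) (b - v) hauI.1 hauI.2 hbvI.1 hbvI.2 hao' hbo' hne hne'
        have h2 := d_flow hd2 huI.1 huI.2 hvI.1 hvI.2 (by omega) huv huv'
        have := parallel_glue hpc h1 h2
        rwa [show a - u + u = a by ring, show b - v + v = b by ring] at this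
      · obtain ⟨u, huI, v, hvI, hu4, hv4, ⟨huv, huv'⟩, hauI, hbvI, hao', hbo', hne, hne'⟩ :=
          choiceM4 a haI b hbI hao (by omega) hab hab'
        simp only [I5, Finset.mem_Icc] at huI hvI hauI hbvI
        have h1 := cap1 (a - u) (b - v) hauI.1 hauI.2 hbvI.1 hbvI.2 hao' hbo' hne hne'
        have hpuv : u % 2 = v % 2 := by
          rcases hu4 with rfl | rfl | rfl | rfl <;> rcases hv4 with rfl | rfl | rfl | rfl <;> rfl
        have h2 := d_flow hd2 huI.1 huI.2 hvI.1 hvI.2 hpuv huv huv'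
        have := parallel_glue hpc h1 h2
        rwa [show a - u + u = a by ring, show b - v + v = b by ring] at this
    · -- H₂ is a chain
      rcases Nat.eq_zero_or_pos (dCount l₂) with hd2 | hd2
      · obtain ⟨e, heI, he0, haeI, hbeI, hao, hbo, hne, hne'⟩ :=
          choiceM1 a haI b hbI hpar hab hab'
        simp only [I5, Finset.mem_Icc] at heI haeI hbeI
        have h1 := cap1 (a - e) (b - e) haeI.1 haeI.2 hbeI.1 hbeI.2 hao hbo hne hne'
        have h2 := chain_flow hl₂ hp₂ e e
          ⟨heI.1, heI.2, heI.1, heI.2, Or.inl ⟨hd2, rfl, he0⟩⟩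
        have := parallel_glue hpc h1 h2
        rwa [show a - e + e = a by ring, show b - e + e = b by ring] at this
      · rcases Int.emod_two_eq a with hae | hao
        · obtain ⟨u, huI, v, hvI, huo, hvo, huv, huv', hauI, hbvI, hao', hbo', hne, hne'⟩ :=
            choiceM2 a haI b hbI hae (by omega) hab hab'
          simp only [I5, Finset.mem_Icc] at huI hvI hauI hbvI
          have h1 := cap1 (a - u) (b - v) hauI.1 hauI.2 hbvI.1 hbvI.2 hao' hbo' hne hne'
          have h2 := chain_flow hl₂ hp₂ u v
            ⟨huI.1, huI.2, hvI.1, hvI.2,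
              Or.inr (Or.inl ⟨hd2, huo, hvo, fun _ => ⟨huv, huv'⟩⟩)⟩
          have := parallel_glue hpc h1 h2
          rwa [show a - u + u = a by ring, show b - v + v = b by ring] at this
        · rcases Nat.even_or_odd (dCount l₂) with hev | hodd
          · obtain ⟨u, huI, v, hvI, hu4, hv4, hueq, hauI, hbvI, hao', hbo', hne, hne'⟩ :=
              choiceM3 a haI b hbI hao (by omega) hab hab'
            simp only [I5, Finset.mem_Icc] at huI hvI hauI hbvI
            have h1 := cap1 (a - u) (b - v) hauI.1 hauI.2 hbvI.1 hbvI.2 hao' hbo' hne hne'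
            have h2 := chain_flow hl₂ hp₂ u v
              ⟨huI.1, huI.2, hvI.1, hvI.2,
                Or.inr (Or.inr ⟨hd2, hu4, hv4, iff_of_true hueq hev⟩)⟩
            have := parallel_glue hpc h1 h2
            rwa [show a - u + u = a by ring, show b - v + v = b by ring] at this
          · obtain ⟨u, huI, v, hvI, hu4, hv4, ⟨huv, huv'⟩, hauI, hbvI, hao', hbo', hne, hne'⟩ :=
              choiceM4 a haI b hbI hao (by omega) hab hab'
            simp only [I5, Finset.mem_Icc] at huI hvI hauI hbvI
            have h1 := cap1 (a - u) (b - v) hauI.1 hauI.2 hbvI.1 hbvI.2 hao' hbo' hne hne'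
            have : ¬ (u = v ∨ u = -v) := by
              rintro (rfl | rfl)
              · exact huv rfl
              · exact huv' rfl
            have h2 := chain_flow hl₂ hp₂ u v
              ⟨huI.1, huI.2, hvI.1, hvI.2,
                Or.inr (Or.inr ⟨hd2, hu4, hv4,
                  iff_of_false this (Nat.not_even_iff_odd.mpr hodd)⟩)⟩
            have := parallel_glue hpc h1 h2
            rwa [show a - u + u = a by ring, show b - v + v = b by ring] at this
  · -- case a = b = 0 and β(G) ≥ 2
    rcases hs2.1 with hk2 | hd2 | ⟨l₂, hl₂, hp₂⟩
    · -- H₂ is a positive K₂: H₁ must contain two unbalanced 2-cycles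
      have hnopar₂ : ∀ e f : ℕ, e ∈ H₂.edges → f ∈ H₂.edges → e ≠ f →
          H₂.toSignedGraph.fst e ≠ H₂.toSignedGraph.snd e →
          ((H₂.toSignedGraph.fst e = H₂.toSignedGraph.fst f ∧
            H₂.toSignedGraph.snd e = H₂.toSignedGraph.snd f) ∨
           (H₂.toSignedGraph.fst e = H₂.toSignedGraph.snd f ∧
            H₂.toSignedGraph.snd e = H₂.toSignedGraph.fst f)) → False := by
        intro e f he hf hef _ _
        obtain ⟨⟨_, e₀, hE, _⟩, _⟩ := hk2
        rw [hE, Finset.mem_singleton] at he hf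
        exact hef (he.trans hf.symm)
      have hd₁2 : 2 ≤ dCount l₁ := beta_arg hpc hl₁ hp₁ hnopar₂ hβ
      have h1 := chain_flow hl₁ hp₁ (-1) (-1)
        ⟨by norm_num, by norm_num, by norm_num, by norm_num,
          Or.inr (Or.inl ⟨hd₁, by decide, by decide, fun hh => absurd hh (by omega)⟩)⟩
      have h2 := k2_flow hk2 (x := 1) (by norm_num) (by norm_num) (by norm_num)
      have := parallel_glue hpc h1 h2
      rwa [show (-1 : ℤ) + 1 = 0 by ring] at this
    · have h1 := cap1 1 3 (by norm_num) (by norm_num) (by norm_num) (by norm_num)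
        (by decide) (by decide) (by norm_num) (by norm_num)
      have h2 := d_flow hd2 (x := -1) (y := -3) (by norm_num) (by norm_num)
        (by norm_num) (by norm_num) (by decide) (by norm_num) (by norm_num)
      have := parallel_glue hpc h1 h2
      rwa [show (1 : ℤ) + -1 = 0 by ring, show (3 : ℤ) + -3 = 0 by ring] at this
    · rcases Nat.eq_zero_or_pos (dCount l₂) with hd2 | hd2
      · have hnopar₂ : ∀ e f : ℕ, e ∈ H₂.edges → f ∈ H₂.edges → e ≠ f →
            H₂.toSignedGraph.fst e ≠ H₂.toSignedGraph.snd e →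
            ((H₂.toSignedGraph.fst e = H₂.toSignedGraph.fst f ∧
              H₂.toSignedGraph.snd e = H₂.toSignedGraph.snd f) ∨
             (H₂.toSignedGraph.fst e = H₂.toSignedGraph.snd f ∧
              H₂.toSignedGraph.snd e = H₂.toSignedGraph.fst f)) → False := by
          intro e f he hf hef hne hpar'
          obtain ⟨P, hPl, hPD, _, _⟩ := chain_par hl₂ hp₂ e f he hf hef hne hpar'
          have := dCount_pos_of_mem hPl hPD
          omega
        have hd₁2 : 2 ≤ dCount l₁ := beta_arg hpc hl₁ hp₁ hnopar₂ hβ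
        have h1 := chain_flow hl₁ hp₁ (-1) (-1)
          ⟨by norm_num, by norm_num, by norm_num, by norm_num,
            Or.inr (Or.inl ⟨hd₁, by decide, by decide, fun hh => absurd hh (by omega)⟩)⟩
        have h2 := chain_flow hl₂ hp₂ 1 1
          ⟨by norm_num, by norm_num, by norm_num, by norm_num,
            Or.inl ⟨hd2, rfl, by norm_num⟩⟩
        have := parallel_glue hpc h1 h2
        rwa [show (-1 : ℤ) + 1 = 0 by ring] at this
      · have h1 := cap1 1 3 (by norm_num) (by norm_num) (by norm_num) (by norm_num)
          (by decide) (by decide) (by norm_num) (by norm_num)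
        have h2 := chain_flow hl₂ hp₂ (-1) (-3)
          ⟨by norm_num, by norm_num, by norm_num, by norm_num,
            Or.inr (Or.inl ⟨hd2, by decide, by decide,
              fun _ => ⟨by norm_num, by norm_num⟩⟩)⟩
        have := parallel_glue hpc h1 h2
        rwa [show (1 : ℤ) + -1 = 0 by ring, show (3 : ℤ) + -3 = 0 by ring] at this

end MainProof

/-- Pseudoflows in necklaces (Lemma 12 of the paper). -/
theorem necklace_pseudoflow (G : TTGraph) (hneck : IsNecklace G)
    (a b : ℤ) (ha : a ∈ I5) (hb : b ∈ I5) (hpar : a % 2 = b % 2)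
    (h : (a ≠ b ∧ a ≠ -b) ∨ (a = 0 ∧ b = 0 ∧ 2 ≤ G.toSignedGraph.beta)) :
    HasPseudoflow G a b := by
  obtain ⟨H₁, H₂, hpc, hs1, hs2, hnt⟩ := hneck
  rcases hnt with hnt | hnt
  · exact necklace_aux hpc hs1 hs2 hnt a b ha hb hpar h
  · exact necklace_aux (parallel_symm hpc) hs2 hs1 hnt a b ha hb hpar h
end
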